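/- arXiv:2104.07794 — 2 statements merged into one kernel-verified Lean document; each statement's English description precedes it below -/
import Mathlib

section
/- Let σ be the ReLU activation, m ∈ ℕ⁺, A a finite set, and let F_r be the class of functions f(x,a) = (1/m) Σ_{j=1}^m b_{j,a} σ(ω_{j,a}·x) on S^{d−1}×A with max_{a∈A} (1/m) Σ_{j=1}^m |b_{j,a}| ‖ω_{j,a}‖ ≤ r. For any probability measure ν on S^{d−1}×A, if (x_1,a_1),…,(x_n,a_n) are i.i.d. from ν and ξ_1,…,ξ_n are i.i.d. Rademacher variables independent of the data, then Rad_n(F_r) = (1/n) E sup_{f∈F_r} Σ_{i=1}^n ξ_i f(x_i,a_i) ≤ 2r √(|A|/n); i.e., part (ii) of Assumption (General) holds with M = 2√|A|. -/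
open MeasureTheory
open scoped NNReal ENNReal

noncomputable section

/-- The Rademacher measure `(1/2)δ_{1} + (1/2)δ_{-1}` on `ℝ`. -/
def radM : Measure ℝ :=
  ((1 : ℝ≥0) / 2) • Measure.dirac (1 : ℝ) + ((1 : ℝ≥0) / 2) • Measure.dirac (-1 : ℝ)

/-- Rademacher complexity `Rad_n(G)` of a class `G` of functions, for `n` i.i.d. samples
from `ν` and independent i.i.d. Rademacher signs. -/
def rad {Z : Type*} [MeasurableSpace Z] (ν : Measure Z) [SigmaFinite ν]
    (G : Set (Z → ℝ)) (n : ℕ) : ℝ :=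
  (n : ℝ)⁻¹ * ∫ zs : Fin n → Z, ∫ ξ : Fin n → ℝ,
      sSup {t : ℝ | ∃ f ∈ G, t = ∑ i, ξ i * f (zs i)}
    ∂(Measure.pi fun _ : Fin n => radM) ∂(Measure.pi fun _ : Fin n => ν)

def sgn {ι : Type*} (s : ι → Bool) : ι → ℝ := fun i => if s i then 1 else -1

lemma csSup_add_csSup_le {A B : Set ℝ} (hA : A.Nonempty) (hB : B.Nonempty) {C : ℝ}
    (h : ∀ a ∈ A, ∀ b ∈ B, a + b ≤ C) : sSup A + sSup B ≤ C := by
  have h1 : sSup A ≤ C - sSup B := by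
    refine csSup_le hA fun a ha => ?_
    have h2 : sSup B ≤ C - a := csSup_le hB fun b hb => by linarith [h a ha b hb]
    linarith
  linarith

lemma exchange {α : Type*} {Ω : Set α} (hΩ : Ω.Nonempty) (u h : α → ℝ) {φ : ℝ → ℝ}
    (hφ : LipschitzWith 1 φ)
    (hb1 : BddAbove ((fun ω => u ω + h ω) '' Ω))
    (hb2 : BddAbove ((fun ω => -u ω + h ω) '' Ω)) :
    sSup ((fun ω => φ (u ω) + h ω) '' Ω) + sSup ((fun ω => -φ (u ω) + h ω) '' Ω)
      ≤ sSup ((fun ω => u ω + h ω) '' Ω) + sSup ((fun ω => -u ω + h ω) '' Ω) := by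
  refine csSup_add_csSup_le (hΩ.image _) (hΩ.image _) ?_
  rintro _ ⟨ω₁, hω₁, rfl⟩ _ ⟨ω₂, hω₂, rfl⟩
  dsimp only
  have lip : φ (u ω₁) - φ (u ω₂) ≤ |u ω₁ - u ω₂| := by
    have h2 := hφ.dist_le_mul (u ω₁) (u ω₂)
    rw [Real.dist_eq, Real.dist_eq] at h2
    calc φ (u ω₁) - φ (u ω₂) ≤ |φ (u ω₁) - φ (u ω₂)| := le_abs_self _
    _ ≤ _ := by simpa using h2
  have m1 : u ω₁ + h ω₁ ≤ sSup ((fun ω => u ω + h ω) '' Ω) := le_csSup hb1 ⟨ω₁, hω₁, rfl⟩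
  have m2 : -u ω₂ + h ω₂ ≤ sSup ((fun ω => -u ω + h ω) '' Ω) := le_csSup hb2 ⟨ω₂, hω₂, rfl⟩
  have m3 : u ω₂ + h ω₂ ≤ sSup ((fun ω => u ω + h ω) '' Ω) := le_csSup hb1 ⟨ω₂, hω₂, rfl⟩
  have m4 : -u ω₁ + h ω₁ ≤ sSup ((fun ω => -u ω + h ω) '' Ω) := le_csSup hb2 ⟨ω₁, hω₁, rfl⟩
  rcases le_total (u ω₂) (u ω₁) with hc | hc
  · rw [abs_of_nonneg (by linarith)] at lip; linarith
  · rw [abs_of_nonpos (by linarith)] at lip; linarith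

lemma bdd_mix {α ι : Type*} [Fintype ι] {Ω : Set α} (v : ι → α → ℝ)
    (hv : ∀ i, ∀ ω ∈ Ω, |v i ω| ≤ 1)
    (c : ι → ℝ) (hc : ∀ i, |c i| ≤ 1) :
    BddAbove ((fun ω => ∑ i, c i * v i ω) '' Ω) := by
  refine ⟨(Fintype.card ι : ℝ), ?_⟩
  rintro _ ⟨ω, hω, rfl⟩
  calc ∑ i, c i * v i ω ≤ ∑ _i : ι, (1:ℝ) := by
        refine Finset.sum_le_sum fun i _ => ?_
        calc c i * v i ω ≤ |c i * v i ω| := le_abs_self _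
        _ = |c i| * |v i ω| := abs_mul _ _
        _ ≤ 1 * 1 := mul_le_mul (hc i) (hv i ω hω) (abs_nonneg _) zero_le_one
        _ = 1 := one_mul 1
  _ = (Fintype.card ι : ℝ) := by simp

lemma hsgn_abs {ι : Type*} (s : ι → Bool) (i : ι) : |sgn s i| ≤ 1 := by
  by_cases h : s i <;> simp [sgn, h]

lemma contraction {α ι : Type*} [Fintype ι] [DecidableEq ι] {Ω : Set α} (hΩ : Ω.Nonempty)
    (u : ι → α → ℝ) (hu : ∀ i, ∀ ω ∈ Ω, |u i ω| ≤ 1)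
    {φ : ℝ → ℝ} (hφ : LipschitzWith 1 φ) (hφ0 : ∀ t, |φ t| ≤ |t|) :
    ∑ s : ι → Bool, sSup ((fun ω => ∑ i, sgn s i * φ (u i ω)) '' Ω)
      ≤ ∑ s : ι → Bool, sSup ((fun ω => ∑ i, sgn s i * u i ω) '' Ω) := by
  set v : Finset ι → ι → α → ℝ := fun J i ω => if i ∈ J then u i ω else φ (u i ω) with hvdef
  have hvb : ∀ (J : Finset ι) i, ∀ ω ∈ Ω, |v J i ω| ≤ 1 := by
    intro J i ω hω
    by_cases h : i ∈ J
    · simpa [hvdef, h] using hu i ω hω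
    · simp only [hvdef, if_neg h]
      exact (hφ0 _).trans (hu i ω hω)
  have main : ∀ J : Finset ι,
      ∑ s : ι → Bool, sSup ((fun ω => ∑ i, sgn s i * φ (u i ω)) '' Ω)
        ≤ ∑ s : ι → Bool, sSup ((fun ω => ∑ i, sgn s i * v J i ω) '' Ω) := by
    intro J
    induction J using Finset.induction_on with
    | empty => simp [hvdef]
    | @insert k J hk ih =>
      refine ih.trans ?_
      set e := Equiv.piSplitAt k (fun _ : ι => Bool) with hedef
      have hre : ∀ (F : (ι → Bool) → ℝ), ∑ s : ι → Bool, F s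
          = ∑ t : {j // j ≠ k} → Bool, ∑ b : Bool, F (e.symm (b, t)) := by
        intro F
        rw [Fintype.sum_equiv e F (fun p => F (e.symm p))
          (fun s => by show F s = F (e.symm (e s)); rw [Equiv.symm_apply_apply]), Fintype.sum_prod_type,
          Finset.sum_comm]
      rw [hre (fun s => sSup ((fun ω => ∑ i, sgn s i * v J i ω) '' Ω)),
        hre (fun s => sSup ((fun ω => ∑ i, sgn s i * v (insert k J) i ω) '' Ω))]
      refine Finset.sum_le_sum fun t _ => ?_
      have hsk : ∀ b : Bool, (e.symm (b, t)) k = b := by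
        intro b; simp [hedef, Equiv.piSplitAt_symm_apply]
      have hsj : ∀ (b : Bool) (j) (hj : j ≠ k), (e.symm (b, t)) j = t ⟨j, hj⟩ := by
        intro b j hj; simp [hedef, Equiv.piSplitAt_symm_apply, hj]
      set h : α → ℝ := fun ω => ∑ i ∈ Finset.univ.erase k, sgn (e.symm (true, t)) i * v J i ω
        with hhdef
      have key : ∀ b : Bool,
          ((fun ω => ∑ i, sgn (e.symm (b,t)) i * v J i ω)
            = fun ω => (if b then (1:ℝ) else -1) * φ (u k ω) + h ω)
          ∧ ((fun ω => ∑ i, sgn (e.symm (b,t)) i * v (insert k J) i ω)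
            = fun ω => (if b then (1:ℝ) else -1) * u k ω + h ω) := by
        intro b
        constructor <;> funext ω <;>
          rw [← Finset.add_sum_erase _ _ (Finset.mem_univ k)] <;>
          [skip; skip] <;> congr 1
        · simp [sgn, hsk b, hvdef, hk]
        · refine Finset.sum_congr rfl fun i hi => ?_
          obtain ⟨hik, -⟩ := Finset.mem_erase.mp hi
          simp [sgn, hsj b i hik, hsj true i hik]
        · simp [sgn, hsk b, hvdef]
        · refine Finset.sum_congr rfl fun i hi => ?_
          obtain ⟨hik, -⟩ := Finset.mem_erase.mp hi
          simp [sgn, hsj b i hik, hsj true i hik, hvdef, Finset.mem_insert, hik]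
      have hb1 : BddAbove ((fun ω => u k ω + h ω) '' Ω) := by
        have := bdd_mix (Ω := Ω) (v (insert k J)) (hvb _) (sgn (e.symm (true, t)))
          (hsgn_abs _)
        rw [(key true).2] at this
        simpa using this
      have hb2 : BddAbove ((fun ω => -u k ω + h ω) '' Ω) := by
        have := bdd_mix (Ω := Ω) (v (insert k J)) (hvb _) (sgn (e.symm (false, t)))
          (hsgn_abs _)
        rw [(key false).2] at this
        simpa [neg_one_mul] using this
      rw [Fintype.sum_bool, Fintype.sum_bool, (key true).1, (key false).1,
        (key true).2, (key false).2]
      simpa [neg_one_mul] using exchange hΩ (fun ω => u k ω) h hφ hb1 hb2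
  have := main Finset.univ
  simpa [hvdef] using this


lemma sum_sgn_mul {ι : Type*} [Fintype ι] [DecidableEq ι] {i j : ι} (hij : i ≠ j) :
    ∑ s : ι → Bool, sgn s i * sgn s j = 0 := by
  have hinv : Function.Involutive (fun s : ι → Bool => Function.update s i (!(s i))) := by
    intro s
    funext l
    by_cases h : l = i
    · subst h; simp
    · simp [Function.update_of_ne h]
  set e := Function.Involutive.toPerm _ hinv with hedef
  have h2 := Equiv.sum_comp e (fun s : ι → Bool => sgn s i * sgn s j)
  have h3 : ∀ s : ι → Bool,
      sgn (e s) i * sgn (e s) j = -(sgn s i * sgn s j) := by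
    intro s
    have e1 : (e s) i = !(s i) := by simp [hedef, Function.Involutive.toPerm]
    have e2 : (e s) j = s j := by
      simp [hedef, Function.Involutive.toPerm, Function.update_of_ne (Ne.symm hij)]
    rw [sgn, sgn, e1, e2]
    cases h : s i <;> cases h2 : s j <;> simp [sgn, h, h2]
  have h4 : ∀ s ∈ Finset.univ, (fun s : ι → Bool => sgn s i * sgn s j) (e s)
      = (fun s : ι → Bool => -(sgn s i * sgn s j)) s := fun s _ => h3 s
  rw [Finset.sum_congr rfl h4, Finset.sum_neg_distrib] at h2
  linarith

lemma sq_sgn {ι : Type*} (s : ι → Bool) (i : ι) : sgn s i * sgn s i = 1 := by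
  cases h : s i <;> simp [sgn, h]

end
noncomputable section

lemma sSup_inner_ball {d : ℕ} (v : EuclideanSpace ℝ (Fin d)) :
    sSup ((fun ω => (inner ℝ ω v : ℝ)) '' (Metric.closedBall 0 1)) = ‖v‖ := by
  have hball : ∀ ω ∈ Metric.closedBall (0 : EuclideanSpace ℝ (Fin d)) 1,
      (inner ℝ ω v : ℝ) ≤ ‖v‖ := by
    intro ω hω
    have h1 : ‖ω‖ ≤ 1 := mem_closedBall_zero_iff.mp hω
    calc (inner ℝ ω v : ℝ) ≤ ‖ω‖ * ‖v‖ := real_inner_le_norm ω v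
    _ ≤ 1 * ‖v‖ := by nlinarith [norm_nonneg v]
    _ = ‖v‖ := one_mul _
  have hb : BddAbove ((fun ω => (inner ℝ ω v : ℝ)) '' Metric.closedBall 0 1) := by
    refine ⟨‖v‖, ?_⟩
    rintro _ ⟨ω, hω, rfl⟩
    exact hball ω hω
  refine le_antisymm (csSup_le (Set.Nonempty.image _ ⟨0, by simp⟩) ?_) ?_
  · rintro _ ⟨ω, hω, rfl⟩
    exact hball ω hω
  · refine le_csSup hb ⟨‖v‖⁻¹ • v, ?_, ?_⟩
    · rw [Metric.mem_closedBall, dist_zero_right, norm_smul]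
      by_cases hv : v = 0
      · simp [hv]
      · rw [norm_inv, norm_norm, inv_mul_cancel₀ (norm_ne_zero_iff.mpr hv)]
    · show (inner ℝ (‖v‖⁻¹ • v) v : ℝ) = ‖v‖
      rw [real_inner_smul_left, real_inner_self_eq_norm_mul_norm]
      by_cases hv : v = 0
      · simp [hv]
      · field_simp

lemma sum_norm_sgn_le {d n : ℕ} (y : Fin n → EuclideanSpace ℝ (Fin d)) (c : ℝ)
    (hy : ∑ i, ‖y i‖ ^ 2 = c) :
    ∑ s : Fin n → Bool, ‖∑ i, sgn s i • y i‖ ≤ 2 ^ n * Real.sqrt c := by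
  have hc0 : 0 ≤ c := hy ▸ Finset.sum_nonneg fun i _ => sq_nonneg _
  have hsq : ∀ s : Fin n → Bool, ‖∑ i, sgn s i • y i‖ ^ 2
      = ∑ i, ∑ j, (sgn s i * sgn s j) * (inner ℝ (y i) (y j) : ℝ) := by
    intro s
    rw [← real_inner_self_eq_norm_sq, sum_inner]
    refine Finset.sum_congr rfl fun i _ => ?_
    rw [inner_sum]
    refine Finset.sum_congr rfl fun j _ => ?_
    rw [real_inner_smul_left, real_inner_smul_right]
    ring
  have hsum2 : ∑ s : Fin n → Bool, ‖∑ i, sgn s i • y i‖ ^ 2 = 2 ^ n * c := by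
    rw [Finset.sum_congr rfl fun s _ => hsq s, Finset.sum_comm]
    have : ∀ i : Fin n, ∑ s : Fin n → Bool, ∑ j,
        (sgn s i * sgn s j) * (inner ℝ (y i) (y j) : ℝ) = 2 ^ n * ‖y i‖ ^ 2 := by
      intro i
      rw [Finset.sum_comm]
      have hz : ∀ j : Fin n, ∑ s : Fin n → Bool,
          (sgn s i * sgn s j) * (inner ℝ (y i) (y j) : ℝ)
          = if j = i then 2 ^ n * ‖y i‖ ^ 2 else 0 := by
        intro j
        rw [← Finset.sum_mul]
        by_cases hij : j = i
        · subst hij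
          rw [if_pos rfl, Finset.sum_congr rfl fun s _ => sq_sgn s j]
          rw [real_inner_self_eq_norm_sq]
          simp [Fintype.card_fun]
        · rw [if_neg hij, sum_sgn_mul fun h => hij h.symm, zero_mul]
      rw [Finset.sum_congr rfl fun j _ => hz j, Finset.sum_ite_eq' Finset.univ i
        (fun _ => 2 ^ n * ‖y i‖ ^ 2), if_pos (Finset.mem_univ i)]
    rw [Finset.sum_congr rfl fun i _ => this i, ← Finset.mul_sum, hy]
  have h0 : (0:ℝ) ≤ ∑ s : Fin n → Bool, ‖∑ i, sgn s i • y i‖ :=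
    Finset.sum_nonneg fun s _ => norm_nonneg _
  have hcs := sq_sum_le_card_mul_sum_sq
    (s := (Finset.univ : Finset (Fin n → Bool))) (f := fun s => ‖∑ i, sgn s i • y i‖)
  rw [hsum2] at hcs
  have hcard : ((Finset.univ : Finset (Fin n → Bool)).card : ℝ) = 2 ^ n := by
    simp [Fintype.card_fun]
  rw [hcard] at hcs
  have h2 : (∑ s : Fin n → Bool, ‖∑ i, sgn s i • y i‖) ^ 2 ≤ ((2:ℝ) ^ n) ^ 2 * c := by
    calc (∑ s : Fin n → Bool, ‖∑ i, sgn s i • y i‖) ^ 2 ≤ 2 ^ n * (2 ^ n * c) := hcs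
    _ = ((2:ℝ) ^ n) ^ 2 * c := by ring
  have h3 := Real.sqrt_le_sqrt h2
  rw [Real.sqrt_sq h0, Real.sqrt_mul (sq_nonneg _), Real.sqrt_sq (by positivity : (0:ℝ) ≤ 2 ^ n)] at h3
  exact h3

lemma sum_sqrt_le {A : Type*} [Fintype A] (g : A → ℕ) (N : ℕ) (hg : ∑ a, g a = N) :
    ∑ a : A, Real.sqrt (g a) ≤ Real.sqrt ((Fintype.card A : ℝ) * N) := by
  have h0 : (0:ℝ) ≤ ∑ a : A, Real.sqrt (g a) :=
    Finset.sum_nonneg fun a _ => Real.sqrt_nonneg _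
  have hcs := sq_sum_le_card_mul_sum_sq
    (s := (Finset.univ : Finset A)) (f := fun a => Real.sqrt (g a))
  have h1 : ∑ a : A, Real.sqrt (g a) ^ 2 = (N : ℝ) := by
    rw [Finset.sum_congr rfl fun a _ => Real.sq_sqrt (by positivity : (0:ℝ) ≤ (g a : ℝ))]
    rw [← Nat.cast_sum, hg]
  rw [h1, Finset.card_univ] at hcs
  have h3 := Real.sqrt_le_sqrt hcs
  rwa [Real.sqrt_sq h0] at h3

end
noncomputable section

set_option maxHeartbeats 2000000 in
lemma key {d n m : ℕ} {A : Type*} [Fintype A] [DecidableEq A] (hm : 0 < m) {r : ℝ} (hr : 0 < r)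
    (zs : Fin n → (↥(Metric.sphere (0 : EuclideanSpace ℝ (Fin d)) 1) × A)) :
    ∑ s : Fin n → Bool,
      sSup {t : ℝ | ∃ f ∈ {f : ↥(Metric.sphere (0 : EuclideanSpace ℝ (Fin d)) 1) × A → ℝ |
        ∃ (b : A → Fin m → ℝ) (w : A → Fin m → EuclideanSpace ℝ (Fin d)),
          (∀ a, (m : ℝ)⁻¹ * (∑ j, |b a j| * ‖w a j‖) ≤ r) ∧
          ∀ x a, f (x, a)
            = (m : ℝ)⁻¹ * ∑ j, b a j * max (inner ℝ (w a j) (x : EuclideanSpace ℝ (Fin d)) : ℝ) 0},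
        t = ∑ i, sgn s i * f (zs i)}
      ≤ 2 ^ n * (2 * r * Real.sqrt ((Fintype.card A : ℝ) * n)) := by
  set Ω : Set (EuclideanSpace ℝ (Fin d)) := Metric.closedBall 0 1 with hΩdef
  have hΩne : Ω.Nonempty := ⟨0, by simp [hΩdef]⟩
  have hxnorm : ∀ i, ‖((zs i).1 : EuclideanSpace ℝ (Fin d))‖ = 1 :=
    fun i => mem_sphere_zero_iff_norm.mp (zs i).1.2
  set y : A → Fin n → EuclideanSpace ℝ (Fin d) :=
    fun a i => if (zs i).2 = a then ((zs i).1 : EuclideanSpace ℝ (Fin d)) else 0 with hydef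
  have hynorm : ∀ a i, ‖y a i‖ ≤ 1 := by
    intro a i
    by_cases h : (zs i).2 = a
    · rw [hydef]; simp only [if_pos h]; rw [hxnorm i]
    · rw [hydef]; simp only [if_neg h]; simp
  set u : A → Fin n → EuclideanSpace ℝ (Fin d) → ℝ :=
    fun a i ω => (inner ℝ ω (y a i) : ℝ) with hudef
  have hub : ∀ a i, ∀ ω ∈ Ω, |u a i ω| ≤ 1 := by
    intro a i ω hω
    calc |u a i ω| ≤ ‖ω‖ * ‖y a i‖ := abs_real_inner_le_norm ω (y a i)
    _ ≤ 1 * 1 := mul_le_mul (mem_closedBall_zero_iff.mp hω) (hynorm a i)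
        (norm_nonneg _) zero_le_one
    _ = 1 := one_mul 1
  have hlip : LipschitzWith 1 (fun t : ℝ => max t 0) :=
    LipschitzWith.of_dist_le_mul fun a b => by
      rw [Real.dist_eq, Real.dist_eq, NNReal.coe_one, one_mul]
      exact abs_max_sub_max_le_abs a b 0
  have hrelu0 : ∀ t : ℝ, |max t 0| ≤ |t| := fun t => by
    rw [abs_of_nonneg (le_max_right t 0)]; exact max_le (le_abs_self t) (abs_nonneg t)
  have hbP : ∀ a (ε : Fin n → ℝ), (∀ i, |ε i| ≤ 1) →
      BddAbove ((fun ω => ∑ i, ε i * max (u a i ω) 0) '' Ω) := by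
    intro a ε hε
    exact bdd_mix (fun i ω => max (u a i ω) 0)
      (fun i ω hω => (hrelu0 _).trans (hub a i ω hω)) ε hε
  have hbL : ∀ a (ε : Fin n → ℝ), (∀ i, |ε i| ≤ 1) →
      BddAbove ((fun ω => ∑ i, ε i * u a i ω) '' Ω) := by
    intro a ε hε
    exact bdd_mix (fun i ω => u a i ω) (fun i ω hω => hub a i ω hω) ε hε
  have hbH : ∀ a (ε : Fin n → ℝ), (∀ i, |ε i| ≤ 1) →
      BddAbove ((fun ω => |∑ i, ε i * max (u a i ω) 0|) '' Ω) := by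
    intro a ε hε
    refine ⟨n, ?_⟩
    rintro _ ⟨ω, hω, rfl⟩
    calc |∑ i, ε i * max (u a i ω) 0| ≤ ∑ i, |ε i * max (u a i ω) 0| :=
          Finset.abs_sum_le_sum_abs _ _
    _ ≤ ∑ _i : Fin n, (1:ℝ) := by
        refine Finset.sum_le_sum fun i _ => ?_
        rw [abs_mul]
        calc |ε i| * |max (u a i ω) 0| ≤ 1 * 1 :=
              mul_le_mul (hε i) ((hrelu0 _).trans (hub a i ω hω)) (abs_nonneg _) zero_le_one
        _ = 1 := one_mul 1
    _ = n := by simp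
  have hval0 : ∀ a (ε : Fin n → ℝ), ∑ i, ε i * max (u a i (0 : EuclideanSpace ℝ (Fin d))) 0 = 0 := by
    intro a ε
    refine Finset.sum_eq_zero fun i _ => ?_
    have hu0 : u a i 0 = 0 := by rw [hudef]; exact inner_zero_left _
    rw [hu0, max_self, mul_zero]
  have hΩ0 : (0 : EuclideanSpace ℝ (Fin d)) ∈ Ω := by simp [hΩdef]
  have h0P : ∀ a (ε : Fin n → ℝ), (∀ i, |ε i| ≤ 1) →
      0 ≤ sSup ((fun ω => ∑ i, ε i * max (u a i ω) 0) '' Ω) := by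
    intro a ε hε
    refine le_csSup (hbP a ε hε) ⟨0, hΩ0, hval0 a ε⟩
  have h0H : ∀ a (ε : Fin n → ℝ), (∀ i, |ε i| ≤ 1) →
      0 ≤ sSup ((fun ω => |∑ i, ε i * max (u a i ω) 0|) '' Ω) := by
    intro a ε hε
    refine le_csSup (hbH a ε hε) ⟨0, hΩ0, ?_⟩
    show |∑ i, ε i * max (u a i (0 : EuclideanSpace ℝ (Fin d))) 0| = 0
    rw [hval0 a ε, abs_zero]
  -- Step A
  have stepA : ∀ s : Fin n → Bool,
      sSup {t : ℝ | ∃ f ∈ {f : ↥(Metric.sphere (0 : EuclideanSpace ℝ (Fin d)) 1) × A → ℝ |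
        ∃ (b : A → Fin m → ℝ) (w : A → Fin m → EuclideanSpace ℝ (Fin d)),
          (∀ a, (m : ℝ)⁻¹ * (∑ j, |b a j| * ‖w a j‖) ≤ r) ∧
          ∀ x a, f (x, a)
            = (m : ℝ)⁻¹ * ∑ j, b a j * max (inner ℝ (w a j) (x : EuclideanSpace ℝ (Fin d)) : ℝ) 0},
        t = ∑ i, sgn s i * f (zs i)}
      ≤ r * ∑ a, sSup ((fun ω => |∑ i, sgn s i * max (u a i ω) 0|) '' Ω) := by
    intro s
    refine Real.sSup_le ?_ (mul_nonneg hr.le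
      (Finset.sum_nonneg fun a _ => h0H a _ (hsgn_abs s)))
    rintro t ⟨f, ⟨b, w, hbw, hf⟩, rfl⟩
    have hdec : ∑ i, sgn s i * f (zs i)
        = ∑ a, ∑ i ∈ Finset.univ.filter (fun i => (zs i).2 = a), sgn s i * f (zs i) := by
      have e1 := Finset.sum_fiberwise_eq_sum_filter Finset.univ Finset.univ
        (fun i => (zs i).2) (fun i => sgn s i * f (zs i))
      simpa using e1.symm
    rw [hdec, Finset.mul_sum]
    refine Finset.sum_le_sum fun a _ => ?_
    have hSa0 : 0 ≤ sSup ((fun ω => |∑ i, sgn s i * max (u a i ω) 0|) '' Ω) :=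
      h0H a _ (hsgn_abs s)
    have hstep1 : ∑ i ∈ Finset.univ.filter (fun i => (zs i).2 = a), sgn s i * f (zs i)
        = (m:ℝ)⁻¹ * ∑ j, b a j * ∑ i ∈ Finset.univ.filter (fun i => (zs i).2 = a),
            sgn s i * max ((inner ℝ (w a j) ((zs i).1 : EuclideanSpace ℝ (Fin d))) : ℝ) 0 := by
      have hfz : ∀ i ∈ Finset.univ.filter (fun i => (zs i).2 = a),
          sgn s i * f (zs i) = ∑ j, (m:ℝ)⁻¹ * (b a j * (sgn s i *
            max ((inner ℝ (w a j) ((zs i).1 : EuclideanSpace ℝ (Fin d))) : ℝ) 0)) := by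
        intro i hi
        have ha : (zs i).2 = a := (Finset.mem_filter.mp hi).2
        have hfi : f (zs i) = (m:ℝ)⁻¹ * ∑ j, b a j *
            max ((inner ℝ (w a j) ((zs i).1 : EuclideanSpace ℝ (Fin d))) : ℝ) 0 := by
          rw [← ha]; exact hf (zs i).1 (zs i).2
        rw [hfi, Finset.mul_sum, Finset.mul_sum]
        exact Finset.sum_congr rfl fun j _ => by ring
      rw [Finset.sum_congr rfl hfz, Finset.sum_comm, Finset.mul_sum]
      refine Finset.sum_congr rfl fun j _ => ?_
      rw [Finset.mul_sum, Finset.mul_sum]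
    rw [hstep1]
    have hperj : ∀ j, b a j * ∑ i ∈ Finset.univ.filter (fun i => (zs i).2 = a),
        sgn s i * max ((inner ℝ (w a j) ((zs i).1 : EuclideanSpace ℝ (Fin d))) : ℝ) 0
        ≤ |b a j| * (‖w a j‖ *
          sSup ((fun ω => |∑ i, sgn s i * max (u a i ω) 0|) '' Ω)) := by
      intro j
      by_cases hw : w a j = 0
      · rw [hw]
        simp only [inner_zero_left, max_self, mul_zero, Finset.sum_const_zero, norm_zero,
          zero_mul]
        simp
      · set ω₀ : EuclideanSpace ℝ (Fin d) := ‖w a j‖⁻¹ • w a j with hω₀def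
        have hωmem : ω₀ ∈ Ω := by
          rw [hΩdef, Metric.mem_closedBall, dist_zero_right, hω₀def, norm_smul, norm_inv,
            norm_norm, inv_mul_cancel₀ (norm_ne_zero_iff.mpr hw)]
        have hhom : ∀ i ∈ Finset.univ.filter (fun i => (zs i).2 = a),
            sgn s i * max ((inner ℝ (w a j) ((zs i).1 : EuclideanSpace ℝ (Fin d))) : ℝ) 0
            = ‖w a j‖ * (sgn s i * max (u a i ω₀) 0) := by
          intro i hi
          have ha : (zs i).2 = a := (Finset.mem_filter.mp hi).2
          have h1 : u a i ω₀
              = ‖w a j‖⁻¹ * ((inner ℝ (w a j) ((zs i).1 : EuclideanSpace ℝ (Fin d))) : ℝ) := by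
            rw [hudef]
            show (inner ℝ ω₀ (y a i) : ℝ) = _
            rw [hydef]
            simp only [if_pos ha]
            rw [hω₀def, real_inner_smul_left]
          have h2 : max (‖w a j‖⁻¹ * ((inner ℝ (w a j) ((zs i).1 : EuclideanSpace ℝ (Fin d))) : ℝ)) 0
              = ‖w a j‖⁻¹ * max ((inner ℝ (w a j) ((zs i).1 : EuclideanSpace ℝ (Fin d))) : ℝ) 0 := by
            rw [mul_max_of_nonneg _ _ (inv_nonneg.mpr (norm_nonneg _)), mul_zero]
          rw [h1, h2]
          have hnz : ‖w a j‖ ≠ 0 := norm_ne_zero_iff.mpr hw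
          field_simp
        have hext : ∑ i ∈ Finset.univ.filter (fun i => (zs i).2 = a),
            sgn s i * max (u a i ω₀) 0 = ∑ i, sgn s i * max (u a i ω₀) 0 := by
          rw [Finset.sum_filter]
          refine Finset.sum_congr rfl fun i _ => ?_
          by_cases hP : (zs i).2 = a
          · rw [if_pos hP]
          · rw [if_neg hP]
            have hy0 : y a i = 0 := by rw [hydef]; exact if_neg hP
            have hu0 : u a i ω₀ = 0 := by
              rw [hudef]
              show (inner ℝ ω₀ (y a i) : ℝ) = 0
              rw [hy0]
              exact inner_zero_right _
            rw [hu0, max_self, mul_zero]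
        have hle : |∑ i ∈ Finset.univ.filter (fun i => (zs i).2 = a),
            sgn s i * max (u a i ω₀) 0|
            ≤ sSup ((fun ω => |∑ i, sgn s i * max (u a i ω) 0|) '' Ω) := by
          rw [hext]
          exact le_csSup (hbH a _ (hsgn_abs s)) ⟨ω₀, hωmem, rfl⟩
        rw [Finset.sum_congr rfl hhom, ← Finset.mul_sum]
        set S := ∑ i ∈ Finset.univ.filter (fun i => (zs i).2 = a),
          sgn s i * max (u a i ω₀) 0 with hSdef
        have h3 : |S| ≤ sSup ((fun ω => |∑ i, sgn s i * max (u a i ω) 0|) '' Ω) := hle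
        have h8 := norm_nonneg (w a j)
        have h9 := abs_nonneg (b a j)
        calc b a j * (‖w a j‖ * S) ≤ |b a j * (‖w a j‖ * S)| := le_abs_self _
        _ = |b a j| * (‖w a j‖ * |S|) := by rw [abs_mul, abs_mul, abs_of_nonneg h8]
        _ ≤ |b a j| * (‖w a j‖ * sSup ((fun ω => |∑ i, sgn s i * max (u a i ω) 0|) '' Ω)) := by
            exact mul_le_mul_of_nonneg_left (mul_le_mul_of_nonneg_left h3 h8) h9
    calc (m:ℝ)⁻¹ * ∑ j, b a j * ∑ i ∈ Finset.univ.filter (fun i => (zs i).2 = a),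
        sgn s i * max ((inner ℝ (w a j) ((zs i).1 : EuclideanSpace ℝ (Fin d))) : ℝ) 0
        ≤ (m:ℝ)⁻¹ * ∑ j, |b a j| * (‖w a j‖ *
            sSup ((fun ω => |∑ i, sgn s i * max (u a i ω) 0|) '' Ω)) := by
          refine mul_le_mul_of_nonneg_left (Finset.sum_le_sum fun j _ => hperj j) ?_
          positivity
    _ = ((m:ℝ)⁻¹ * ∑ j, |b a j| * ‖w a j‖) *
          sSup ((fun ω => |∑ i, sgn s i * max (u a i ω) 0|) '' Ω) := by
          rw [mul_assoc, Finset.sum_mul]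
          congr 1
          exact Finset.sum_congr rfl fun j _ => (mul_assoc _ _ _).symm
    _ ≤ r * sSup ((fun ω => |∑ i, sgn s i * max (u a i ω) 0|) '' Ω) :=
          mul_le_mul_of_nonneg_right (hbw a) hSa0
  have hnotinv : Function.Involutive (fun s : Fin n → Bool => fun i => !(s i)) := by
    intro s; funext i; simp
  have stepB : ∀ a, ∑ s : Fin n → Bool,
      sSup ((fun ω => |∑ i, sgn s i * max (u a i ω) 0|) '' Ω)
      ≤ 2 * ∑ s : Fin n → Bool, sSup ((fun ω => ∑ i, sgn s i * max (u a i ω) 0) '' Ω) := by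
    intro a
    have hpt : ∀ s : Fin n → Bool,
        sSup ((fun ω => |∑ i, sgn s i * max (u a i ω) 0|) '' Ω)
        ≤ sSup ((fun ω => ∑ i, sgn s i * max (u a i ω) 0) '' Ω)
          + sSup ((fun ω => ∑ i, sgn (fun i' => !(s i')) i * max (u a i ω) 0) '' Ω) := by
      intro s
      refine csSup_le (hΩne.image _) ?_
      rintro _ ⟨ω, hω, rfl⟩
      have hA0 := h0P a (sgn s) (hsgn_abs s)
      have hB0 := h0P a (sgn (fun i' => !(s i'))) (hsgn_abs _)
      have hg1 : ∑ i, sgn s i * max (u a i ω) 0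
          ≤ sSup ((fun ω => ∑ i, sgn s i * max (u a i ω) 0) '' Ω) :=
        le_csSup (hbP a _ (hsgn_abs s)) ⟨ω, hω, rfl⟩
      have hg2 : -(∑ i, sgn s i * max (u a i ω) 0)
          ≤ sSup ((fun ω => ∑ i, sgn (fun i' => !(s i')) i * max (u a i ω) 0) '' Ω) := by
        have hneg : -(∑ i, sgn s i * max (u a i ω) 0)
            = ∑ i, sgn (fun i' => !(s i')) i * max (u a i ω) 0 := by
          rw [← Finset.sum_neg_distrib]
          refine Finset.sum_congr rfl fun i _ => ?_
          cases h : s i <;> simp [sgn, h]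
        rw [hneg]
        exact le_csSup (hbP a _ (hsgn_abs _)) ⟨ω, hω, rfl⟩
      exact abs_le.mpr ⟨by linarith, by linarith⟩
    calc ∑ s : Fin n → Bool, sSup ((fun ω => |∑ i, sgn s i * max (u a i ω) 0|) '' Ω)
        ≤ ∑ s : Fin n → Bool, (sSup ((fun ω => ∑ i, sgn s i * max (u a i ω) 0) '' Ω)
          + sSup ((fun ω => ∑ i, sgn (fun i' => !(s i')) i * max (u a i ω) 0) '' Ω)) :=
          Finset.sum_le_sum fun s _ => hpt s
    _ = ∑ s : Fin n → Bool, sSup ((fun ω => ∑ i, sgn s i * max (u a i ω) 0) '' Ω)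
          + ∑ s : Fin n → Bool,
            sSup ((fun ω => ∑ i, sgn (fun i' => !(s i')) i * max (u a i ω) 0) '' Ω) :=
          Finset.sum_add_distrib
    _ = 2 * ∑ s : Fin n → Bool, sSup ((fun ω => ∑ i, sgn s i * max (u a i ω) 0) '' Ω) := by
        have hre : ∑ s : Fin n → Bool,
            sSup ((fun ω => ∑ i, sgn (fun i' => !(s i')) i * max (u a i ω) 0) '' Ω)
            = ∑ s : Fin n → Bool, sSup ((fun ω => ∑ i, sgn s i * max (u a i ω) 0) '' Ω) :=
          Fintype.sum_equiv (Function.Involutive.toPerm _ hnotinv) _ _ (fun s => rfl)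
        rw [hre]; ring
  have stepC : ∀ a, ∑ s : Fin n → Bool,
      sSup ((fun ω => ∑ i, sgn s i * max (u a i ω) 0) '' Ω)
      ≤ ∑ s : Fin n → Bool, sSup ((fun ω => ∑ i, sgn s i * u a i ω) '' Ω) := by
    intro a
    have H := contraction hΩne (u a) (hub a) hlip hrelu0
    beta_reduce at H
    exact H
  have stepL : ∀ a (s : Fin n → Bool), sSup ((fun ω => ∑ i, sgn s i * u a i ω) '' Ω)
      = ‖∑ i, sgn s i • y a i‖ := by
    intro a s
    have heq : (fun ω : EuclideanSpace ℝ (Fin d) => ∑ i, sgn s i * u a i ω)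
        = fun ω => (inner ℝ ω (∑ i, sgn s i • y a i) : ℝ) := by
      funext ω
      simp only [hudef, inner_sum, real_inner_smul_right]
    rw [heq, hΩdef]
    exact sSup_inner_ball _
  have stepD : ∀ a, ∑ s : Fin n → Bool, ‖∑ i, sgn s i • y a i‖
      ≤ 2 ^ n * Real.sqrt ((Finset.univ.filter (fun i => (zs i).2 = a)).card) := by
    intro a
    refine sum_norm_sgn_le (y a) _ ?_
    have hsq : ∀ i, ‖y a i‖ ^ 2 = if (zs i).2 = a then (1:ℝ) else 0 := by
      intro i
      by_cases h : (zs i).2 = a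
      · rw [if_pos h, hydef]; simp only [if_pos h]; rw [hxnorm i]; norm_num
      · rw [if_neg h, hydef]; simp only [if_neg h]; simp
    rw [Finset.sum_congr rfl fun i _ => hsq i, Finset.sum_boole]
  have stepE : ∑ a : A, Real.sqrt (((Finset.univ.filter (fun i => (zs i).2 = a)).card : ℝ))
      ≤ Real.sqrt ((Fintype.card A : ℝ) * n) := by
    refine sum_sqrt_le _ n ?_
    have hc := Finset.card_eq_sum_card_fiberwise (f := fun i : Fin n => (zs i).2)
      (s := Finset.univ) (t := Finset.univ) (fun x _ => Finset.mem_univ _)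
    simpa using hc.symm
  refine le_trans (Finset.sum_le_sum fun s _ => stepA s) ?_
  have h1 : ∑ s : Fin n → Bool,
      (r * ∑ a, sSup ((fun ω => |∑ i, sgn s i * max (u a i ω) 0|) '' Ω))
      = r * ∑ a, ∑ s : Fin n → Bool,
          sSup ((fun ω => |∑ i, sgn s i * max (u a i ω) 0|) '' Ω) := by
    rw [← Finset.mul_sum, Finset.sum_comm]
  rw [h1]
  have h2 : ∑ a : A, ∑ s : Fin n → Bool,
      sSup ((fun ω => |∑ i, sgn s i * max (u a i ω) 0|) '' Ω)
      ≤ ∑ a : A, 2 * (2 ^ n *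
          Real.sqrt (((Finset.univ.filter (fun i => (zs i).2 = a)).card : ℝ))) := by
    refine Finset.sum_le_sum fun a _ => ?_
    calc ∑ s : Fin n → Bool, sSup ((fun ω => |∑ i, sgn s i * max (u a i ω) 0|) '' Ω)
        ≤ 2 * ∑ s : Fin n → Bool,
            sSup ((fun ω => ∑ i, sgn s i * max (u a i ω) 0) '' Ω) := stepB a
    _ ≤ 2 * ∑ s : Fin n → Bool, sSup ((fun ω => ∑ i, sgn s i * u a i ω) '' Ω) := by
        linarith [stepC a]
    _ = 2 * ∑ s : Fin n → Bool, ‖∑ i, sgn s i • y a i‖ := by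
        rw [Finset.sum_congr rfl fun s _ => stepL a s]
    _ ≤ 2 * (2 ^ n * Real.sqrt (((Finset.univ.filter (fun i => (zs i).2 = a)).card : ℝ))) := by
        linarith [stepD a]
  calc r * ∑ a, ∑ s : Fin n → Bool, sSup ((fun ω => |∑ i, sgn s i * max (u a i ω) 0|) '' Ω)
      ≤ r * ∑ a : A, 2 * (2 ^ n *
          Real.sqrt (((Finset.univ.filter (fun i => (zs i).2 = a)).card : ℝ))) :=
        mul_le_mul_of_nonneg_left h2 hr.le
  _ = r * ∑ a : A, ((2 * 2 ^ n) *
        Real.sqrt (((Finset.univ.filter (fun i => (zs i).2 = a)).card : ℝ))) := by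
        congr 1
        exact Finset.sum_congr rfl fun a _ => by ring
  _ = r * (2 * 2 ^ n * ∑ a : A,
        Real.sqrt (((Finset.univ.filter (fun i => (zs i).2 = a)).card : ℝ))) := by
        rw [← Finset.mul_sum]
  _ ≤ r * (2 * 2 ^ n * Real.sqrt ((Fintype.card A : ℝ) * n)) := by
        have h2n : (0:ℝ) ≤ 2 * 2 ^ n := by positivity
        exact mul_le_mul_of_nonneg_left (mul_le_mul_of_nonneg_left stepE h2n) hr.le
  _ = 2 ^ n * (2 * r * Real.sqrt ((Fintype.card A : ℝ) * n)) := by ring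

end

instance : IsFiniteMeasure radM := by
  constructor
  rw [radM, Measure.add_apply, Measure.smul_apply, Measure.smul_apply]
  simp [measure_univ, ENNReal.smul_def]

lemma radM_pi (n : ℕ) :
    (Measure.pi fun _ : Fin n => radM)
      = ((2 : ℝ≥0∞) ^ n)⁻¹ • ∑ s : Fin n → Bool, Measure.dirac (sgn s) := by
  refine (Measure.pi_eq (μ := fun _ : Fin n => radM) fun t ht => ?_)
  have hms : MeasurableSet (Set.univ.pi t) := MeasurableSet.univ_pi ht
  have hind : ∀ s : Fin n → Bool,
      (Set.univ.pi t).indicator (1 : (Fin n → ℝ) → ℝ≥0∞) (sgn s)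
        = ∏ i, (t i).indicator 1 (sgn s i) := by
    intro s
    by_cases h : ∀ i, sgn s i ∈ t i
    · have h1 : (Set.univ.pi t).indicator (1 : (Fin n → ℝ) → ℝ≥0∞) (sgn s) = 1 := by
        rw [Set.indicator_of_mem (by simpa [Set.mem_pi] using h)]; rfl
      rw [h1, eq_comm]
      exact Finset.prod_eq_one fun i _ => by rw [Set.indicator_of_mem (h i)]; rfl
    · push_neg at h; obtain ⟨i, hi⟩ := h
      rw [Set.indicator_of_notMem (by simpa [Set.mem_pi] using ⟨i, hi⟩)]
      exact (Finset.prod_eq_zero (Finset.mem_univ i) (Set.indicator_of_notMem hi _)).symm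
  have hdirac : ∀ s : Fin n → Bool,
      Measure.dirac (sgn s) (Set.univ.pi t) = ∏ i, (t i).indicator 1 (sgn s i) := by
    intro s
    rw [Measure.dirac_apply' _ hms, hind s]
  rw [Measure.smul_apply, Measure.finset_sum_apply]
  simp only [hdirac]
  have hswap : ∑ s : Fin n → Bool, ∏ i, ((t i).indicator 1 (sgn s i) : ℝ≥0∞)
      = ∏ i : Fin n, ∑ b : Bool, ((t i).indicator 1 (if b then (1:ℝ) else -1) : ℝ≥0∞) := by
    rw [Finset.prod_univ_sum (fun _ => (Finset.univ : Finset Bool))]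
    rw [Fintype.piFinset_univ]
    rfl
  rw [hswap, smul_eq_mul]
  have h2 : ((2 : ℝ≥0∞) ^ n)⁻¹ = ∏ _i : Fin n, (2 : ℝ≥0∞)⁻¹ := by
    simp [ENNReal.inv_pow]
  rw [h2, ← Finset.prod_mul_distrib]
  refine Finset.prod_congr rfl fun i _ => ?_
  have : radM (t i) = 2⁻¹ * (t i).indicator 1 (1:ℝ) + 2⁻¹ * (t i).indicator 1 (-1:ℝ) := by
    rw [radM, Measure.add_apply, Measure.smul_apply, Measure.smul_apply,
      Measure.dirac_apply' _ (ht i), Measure.dirac_apply' _ (ht i)]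
    norm_num [ENNReal.div_eq_inv_mul, ENNReal.smul_def, smul_eq_mul]
  rw [this, Fintype.sum_bool]
  norm_num [mul_add]

lemma integral_radM_pi {n : ℕ} (g : (Fin n → ℝ) → ℝ) :
    ∫ ξ, g ξ ∂(Measure.pi fun _ : Fin n => radM)
      = ((2:ℝ)^n)⁻¹ * ∑ s : Fin n → Bool, g (sgn s) := by
  rw [radM_pi, integral_smul_measure, integral_finset_sum_measure]
  · congr 1
    · simp [ENNReal.toReal_inv]
    · exact Finset.sum_congr rfl fun s _ => integral_dirac g (sgn s)
  · intro s _
    exact (integrable_congr (MeasureTheory.ae_eq_dirac g)).mpr (integrable_const _)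


/-- Rademacher complexity bound for the class `F_r` of two-layer ReLU networks
`f(x,a) = (1/m) Σ_j b_{j,a} σ(ω_{j,a}·x)` on `S^{d-1} × A` with path norm
`max_a (1/m) Σ_j |b_{j,a}| ‖ω_{j,a}‖ ≤ r`: for any probability measure `ν` on `S^{d-1} × A`,
`Rad_n(F_r) ≤ 2 r √(|A|/n)`. -/
theorem stmt4 {d : ℕ} {A : Type*} [Fintype A] [MeasurableSpace A]
    (m : ℕ) (hm : 0 < m)
    (ν : Measure (↥(Metric.sphere (0 : EuclideanSpace ℝ (Fin d)) 1) × A))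
    [IsProbabilityMeasure ν]
    (n : ℕ) (hn : 1 ≤ n) (r : ℝ) (hr : 0 < r) :
    rad ν {f : ↥(Metric.sphere (0 : EuclideanSpace ℝ (Fin d)) 1) × A → ℝ |
        ∃ (b : A → Fin m → ℝ) (w : A → Fin m → EuclideanSpace ℝ (Fin d)),
          (∀ a, (m : ℝ)⁻¹ * (∑ j, |b a j| * ‖w a j‖) ≤ r) ∧
          ∀ x a, f (x, a)
            = (m : ℝ)⁻¹ * ∑ j, b a j * max (inner ℝ (w a j) (x : EuclideanSpace ℝ (Fin d)) : ℝ) 0} n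
      ≤ 2 * r * Real.sqrt ((Fintype.card A : ℝ) / n) := by
  classical
  unfold rad
  set G : Set ((↥(Metric.sphere (0 : EuclideanSpace ℝ (Fin d)) 1) × A) → ℝ) :=
    {f : ↥(Metric.sphere (0 : EuclideanSpace ℝ (Fin d)) 1) × A → ℝ |
        ∃ (b : A → Fin m → ℝ) (w : A → Fin m → EuclideanSpace ℝ (Fin d)),
          (∀ a, (m : ℝ)⁻¹ * (∑ j, |b a j| * ‖w a j‖) ≤ r) ∧
          ∀ x a, f (x, a)
            = (m : ℝ)⁻¹ * ∑ j, b a j * max (inner ℝ (w a j) (x : EuclideanSpace ℝ (Fin d)) : ℝ) 0}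
    with hGdef
  have hn0 : (0:ℝ) < n := by exact_mod_cast hn
  have hAn0 : (0:ℝ) ≤ (Fintype.card A : ℝ) * n := by positivity
  have hB0 : (0:ℝ) ≤ 2 * r * Real.sqrt ((Fintype.card A : ℝ) * n) := by positivity
  have hinner : ∀ zs : Fin n → (↥(Metric.sphere (0 : EuclideanSpace ℝ (Fin d)) 1) × A),
      ∫ ξ : Fin n → ℝ, sSup {t : ℝ | ∃ f ∈ G, t = ∑ i, ξ i * f (zs i)}
        ∂(Measure.pi fun _ : Fin n => radM)
      = ((2:ℝ)^n)⁻¹ * ∑ s : Fin n → Bool,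
          sSup {t : ℝ | ∃ f ∈ G, t = ∑ i, sgn s i * f (zs i)} :=
    fun zs => integral_radM_pi
      (fun ξ => sSup {t : ℝ | ∃ f ∈ G, t = ∑ i, ξ i * f (zs i)})
  have hbound : ∀ zs : Fin n → (↥(Metric.sphere (0 : EuclideanSpace ℝ (Fin d)) 1) × A),
      ((2:ℝ)^n)⁻¹ * ∑ s : Fin n → Bool,
          sSup {t : ℝ | ∃ f ∈ G, t = ∑ i, sgn s i * f (zs i)}
      ≤ 2 * r * Real.sqrt ((Fintype.card A : ℝ) * n) := by
    intro zs
    have hk := key (n := n) hm hr zs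
    rw [hGdef]
    calc ((2:ℝ)^n)⁻¹ * ∑ s : Fin n → Bool,
          sSup {t : ℝ | ∃ f ∈ {f : ↥(Metric.sphere (0 : EuclideanSpace ℝ (Fin d)) 1) × A → ℝ |
            ∃ (b : A → Fin m → ℝ) (w : A → Fin m → EuclideanSpace ℝ (Fin d)),
              (∀ a, (m : ℝ)⁻¹ * (∑ j, |b a j| * ‖w a j‖) ≤ r) ∧
              ∀ x a, f (x, a) = (m : ℝ)⁻¹ * ∑ j, b a j *
                max (inner ℝ (w a j) (x : EuclideanSpace ℝ (Fin d)) : ℝ) 0},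
            t = ∑ i, sgn s i * f (zs i)}
        ≤ ((2:ℝ)^n)⁻¹ * (2 ^ n * (2 * r * Real.sqrt ((Fintype.card A : ℝ) * n))) :=
          mul_le_mul_of_nonneg_left hk (by positivity)
    _ = 2 * r * Real.sqrt ((Fintype.card A : ℝ) * n) := by
        rw [← mul_assoc, inv_mul_cancel₀ (by positivity : ((2:ℝ)^n) ≠ 0), one_mul]
  have hcongr : ∫ zs : Fin n → (↥(Metric.sphere (0 : EuclideanSpace ℝ (Fin d)) 1) × A),
      (∫ ξ : Fin n → ℝ, sSup {t : ℝ | ∃ f ∈ G, t = ∑ i, ξ i * f (zs i)}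
        ∂(Measure.pi fun _ : Fin n => radM)) ∂(Measure.pi fun _ : Fin n => ν)
      = ∫ zs : Fin n → (↥(Metric.sphere (0 : EuclideanSpace ℝ (Fin d)) 1) × A),
        (((2:ℝ)^n)⁻¹ * ∑ s : Fin n → Bool,
          sSup {t : ℝ | ∃ f ∈ G, t = ∑ i, sgn s i * f (zs i)}) ∂(Measure.pi fun _ : Fin n => ν) :=
    integral_congr_ae (Filter.Eventually.of_forall fun zs => hinner zs)
  rw [hcongr]
  have hle : ∫ zs : Fin n → (↥(Metric.sphere (0 : EuclideanSpace ℝ (Fin d)) 1) × A),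
      (((2:ℝ)^n)⁻¹ * ∑ s : Fin n → Bool,
        sSup {t : ℝ | ∃ f ∈ G, t = ∑ i, sgn s i * f (zs i)}) ∂(Measure.pi fun _ : Fin n => ν)
      ≤ 2 * r * Real.sqrt ((Fintype.card A : ℝ) * n) := by
    by_cases hint : Integrable (fun zs : Fin n → (↥(Metric.sphere (0 : EuclideanSpace ℝ (Fin d)) 1) × A) =>
        ((2:ℝ)^n)⁻¹ * ∑ s : Fin n → Bool,
          sSup {t : ℝ | ∃ f ∈ G, t = ∑ i, sgn s i * f (zs i)})
        (Measure.pi fun _ : Fin n => ν)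
    · calc _ ≤ ∫ _zs : Fin n → (↥(Metric.sphere (0 : EuclideanSpace ℝ (Fin d)) 1) × A),
            (2 * r * Real.sqrt ((Fintype.card A : ℝ) * n)) ∂(Measure.pi fun _ : Fin n => ν) :=
            integral_mono hint (integrable_const _) hbound
      _ = 2 * r * Real.sqrt ((Fintype.card A : ℝ) * n) := by
            rw [integral_const]
            simp [measure_univ]
    · rw [integral_undef hint]
      exact hB0
  calc (n : ℝ)⁻¹ * ∫ zs : Fin n → (↥(Metric.sphere (0 : EuclideanSpace ℝ (Fin d)) 1) × A),
      (((2:ℝ)^n)⁻¹ * ∑ s : Fin n → Bool,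
        sSup {t : ℝ | ∃ f ∈ G, t = ∑ i, sgn s i * f (zs i)}) ∂(Measure.pi fun _ : Fin n => ν)
      ≤ (n : ℝ)⁻¹ * (2 * r * Real.sqrt ((Fintype.card A : ℝ) * n)) :=
        mul_le_mul_of_nonneg_left hle (by positivity)
  _ = 2 * r * Real.sqrt ((Fintype.card A : ℝ) / n) := by
      have h1 : (Fintype.card A : ℝ) / n = ((Fintype.card A : ℝ) * n) / ((n:ℝ)^2) := by
        field_simp
      have hs : Real.sqrt ((Fintype.card A : ℝ) / n)
          = Real.sqrt ((Fintype.card A : ℝ) * n) / n := by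
        rw [h1, Real.sqrt_div hAn0, Real.sqrt_sq hn0.le]
      rw [hs]
      field_simp
end

section
/- Let σ be the ReLU activation and x_1,…,x_{n'} ∈ S^{d−1}. For i.i.d. Rademacher variables ξ_1,…,ξ_{n'} and any r > 0 and m ∈ ℕ⁺, E sup { Σ_{i=1}^{n'} ξ_i (1/m) Σ_{j=1}^m b_j σ(ω_j·x_i) : b_j ∈ ℝ, ω_j ∈ ℝ^d, (1/m) Σ_{j=1}^m |b_j| ‖ω_j‖ ≤ r } ≤ 2r E sup_{‖ω‖=1} Σ_{i=1}^{n'} ξ_i σ(ω·x_i) ≤ 2r √{n'}. -/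
open MeasureTheory
open scoped NNReal ENNReal

noncomputable section

namespace Stmt5Aux


def sg {n : ℕ} (ε : Fin n → Bool) : Fin n → ℝ := fun i => if ε i then 1 else -1

lemma sg_apply_eq_or {n : ℕ} (ε : Fin n → Bool) (i : Fin n) : sg ε i = 1 ∨ sg ε i = -1 := by
  by_cases h : ε i <;> simp [sg, h]

lemma abs_sg_le {n : ℕ} (ε : Fin n → Bool) (i : Fin n) : |sg ε i| ≤ 1 := by
  rcases sg_apply_eq_or ε i with h | h <;> rw [h] <;> norm_num

lemma coe_half : (((1 : ℝ≥0) / 2 : ℝ≥0) : ℝ≥0∞) = (2:ℝ≥0∞)⁻¹ := by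
  rw [ENNReal.coe_div (by norm_num)]
  norm_num

instance : IsProbabilityMeasure radM := by
  constructor
  rw [radM]
  simp only [Measure.add_apply, Measure.smul_apply, measure_univ, ENNReal.smul_def, smul_eq_mul,
    mul_one, coe_half]
  exact ENNReal.inv_two_add_inv_two

lemma radM_apply {s : Set ℝ} (hs : MeasurableSet s) :
    radM s = ∑ b : Bool, (2:ℝ≥0∞)⁻¹ * Set.indicator s (1 : ℝ → ℝ≥0∞) (if b then 1 else -1) := by
  simp only [radM, Measure.add_apply, Measure.smul_apply, Measure.dirac_apply' _ hs,
    Fintype.sum_bool, if_true, if_false, ENNReal.smul_def, smul_eq_mul, coe_half]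
  norm_num

lemma indicator_pi {n : ℕ} (s : Fin n → Set ℝ) (ξ : Fin n → ℝ) :
    Set.indicator (Set.univ.pi s) (1 : ((Fin n → ℝ)) → ℝ≥0∞) ξ
      = ∏ i, Set.indicator (s i) (1 : ℝ → ℝ≥0∞) (ξ i) := by
  by_cases h : ξ ∈ Set.univ.pi s
  · rw [Set.indicator_of_mem h]
    rw [Set.mem_univ_pi] at h
    rw [Finset.prod_eq_one fun i _ => by rw [Set.indicator_of_mem (h i)]; rfl]
    rfl
  · rw [Set.indicator_of_notMem h]
    rw [Set.mem_univ_pi] at h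
    push_neg at h
    obtain ⟨i, hi⟩ := h
    exact (Finset.prod_eq_zero (Finset.mem_univ i) (Set.indicator_of_notMem hi _)).symm

lemma pi_radM (n : ℕ) :
    Measure.pi (fun _ : Fin n => radM)
      = ∑ ε : Fin n → Bool, ((2:ℝ≥0∞) ^ n)⁻¹ • Measure.dirac (sg ε) := by
  refine Measure.pi_eq fun s hs => ?_
  have hmeas : MeasurableSet (Set.pi Set.univ s) := MeasurableSet.univ_pi hs
  rw [Measure.finset_sum_apply]
  have hL : ∀ ε : Fin n → Bool,
      (((2:ℝ≥0∞) ^ n)⁻¹ • Measure.dirac (sg ε)) (Set.pi Set.univ s)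
        = ∏ i, ((2:ℝ≥0∞)⁻¹ * Set.indicator (s i) (1 : ℝ → ℝ≥0∞) (if ε i then 1 else -1)) := by
    intro ε
    rw [Measure.smul_apply, Measure.dirac_apply' _ hmeas, smul_eq_mul]
    rw [indicator_pi, Finset.prod_mul_distrib, Finset.prod_const, Finset.card_univ,
      Fintype.card_fin, ← ENNReal.inv_pow]
    rfl
  simp only [hL]
  have := Finset.prod_univ_sum (fun _ : Fin n => (Finset.univ : Finset Bool))
    (fun i b => (2:ℝ≥0∞)⁻¹ * Set.indicator (s i) (1 : ℝ → ℝ≥0∞) (if b then 1 else -1))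
  rw [Fintype.piFinset_univ] at this
  rw [← this]
  refine Finset.prod_congr rfl fun i _ => ?_
  rw [← radM_apply (hs i)]

lemma integral_pi_radM {n : ℕ} (f : (Fin n → ℝ) → ℝ) :
    ∫ ξ, f ξ ∂(Measure.pi fun _ : Fin n => radM)
      = ((2:ℝ) ^ n)⁻¹ * ∑ ε : Fin n → Bool, f (sg ε) := by
  rw [pi_radM, integral_finset_sum_measure (fun ε _ => ?_)]
  · rw [Finset.mul_sum]
    refine Finset.sum_congr rfl fun ε _ => ?_
    rw [integral_smul_measure, integral_dirac, smul_eq_mul]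
    congr 1
    rw [ENNReal.toReal_inv]
    norm_num
  · refine Integrable.smul_measure ?_ (by simp)
    exact (integrable_const (f (sg ε))).congr (ae_eq_dirac f).symm



/-! ### pure real lemmas -/

def phi (a b : ℝ) : ℝ := if a * b > 0 then -(min |a| |b|) else min |a| |b|

lemma phi_neg_right (a b : ℝ) : phi a (-b) = -phi a b := by
  unfold phi
  rw [abs_neg]
  by_cases h : a * b > 0
  · have h' : ¬(a * -b > 0) := by nlinarith
    rw [if_neg h', if_pos h, neg_neg]
  · by_cases h' : a * -b > 0
    · rw [if_pos h', if_neg h]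
    · have hab : a * b = 0 := by nlinarith [le_of_not_gt h, le_of_not_gt h']
      have hmin : min |a| |b| = 0 := by
        rcases mul_eq_zero.mp hab with h0 | h0
        · rw [h0, abs_zero]; exact min_eq_left (abs_nonneg b)
        · rw [h0, abs_zero]; exact min_eq_right (abs_nonneg a)
      simp [h, h', hmin]

lemma phi_le_min {a b S1 S2 : ℝ} (h1 : a ≤ S1) (h2 : b ≤ S1) (h3 : -a ≤ S2) (h4 : -b ≤ S2) :
    phi a b ≤ min S1 S2 := by
  unfold phi
  rw [le_min_iff]
  by_cases h : a * b > 0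
  · rw [if_pos h]
    rcases mul_pos_iff.mp h with ⟨ha, hb⟩ | ⟨ha, hb⟩
    · rw [abs_of_pos ha, abs_of_pos hb]
      constructor
      · rcases min_cases a b with ⟨h', _⟩ | ⟨h', _⟩ <;> rw [h'] <;> linarith
      · rcases min_cases a b with ⟨h', _⟩ | ⟨h', _⟩ <;> rw [h'] <;> linarith
    · rw [abs_of_neg ha, abs_of_neg hb]
      constructor
      · rcases min_cases (-a) (-b) with ⟨h', _⟩ | ⟨h', _⟩ <;> rw [h'] <;> linarith
      · rcases min_cases (-a) (-b) with ⟨h', _⟩ | ⟨h', _⟩ <;> rw [h'] <;> linarith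
  · rw [if_neg h]
    rcases mul_nonpos_iff.mp (le_of_not_gt h) with ⟨ha, hb⟩ | ⟨ha, hb⟩
    · rw [abs_of_nonneg ha, abs_of_nonpos hb]
      exact ⟨le_trans (min_le_left _ _) h1, le_trans (min_le_right _ _) h4⟩
    · rw [abs_of_nonpos ha, abs_of_nonneg hb]
      exact ⟨le_trans (min_le_right _ _) h2, le_trans (min_le_left _ _) h3⟩

lemma sup_pair {ι : Type*} (hne : Nonempty ι) (a h : ι → ℝ)
    (b1 : BddAbove (Set.range fun i => a i + h i))
    (b2 : BddAbove (Set.range fun i => -a i + h i)) :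
    sSup (Set.range fun i => max (a i) 0 + h i) + sSup (Set.range fun i => -max (a i) 0 + h i)
      ≤ sSup (Set.range fun i => a i + h i) + sSup (Set.range fun i => -a i + h i) := by
  haveI := hne
  set R := sSup (Set.range fun i => a i + h i) with hR
  set W := sSup (Set.range fun i => -a i + h i) with hW
  have key : ∀ i j, max (a i) 0 - max (a j) 0 + h i + h j ≤ R + W := by
    intro i j
    rcases le_total (a j) (a i) with hij | hij
    · have hh1 : a i + h i ≤ R := le_csSup b1 ⟨i, rfl⟩
      have hh2 : -a j + h j ≤ W := le_csSup b2 ⟨j, rfl⟩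
      have hm : max (a i) 0 - max (a j) 0 ≤ a i - a j := by
        rw [max_def, max_def]
        split_ifs <;> linarith
      linarith
    · have hh1 : a j + h j ≤ R := le_csSup b1 ⟨j, rfl⟩
      have hh2 : -a i + h i ≤ W := le_csSup b2 ⟨i, rfl⟩
      have hm : max (a i) 0 ≤ max (a j) 0 := max_le_max hij le_rfl
      linarith
  have hQ : ∀ i, sSup (Set.range fun j => -max (a j) 0 + h j) ≤ R + W - (max (a i) 0 + h i) := by
    intro i
    apply csSup_le (Set.range_nonempty _)
    rintro t ⟨j, rfl⟩
    have := key i j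
    dsimp only
    linarith
  have hP : sSup (Set.range fun i => max (a i) 0 + h i)
      ≤ R + W - sSup (Set.range fun j => -max (a j) 0 + h j) := by
    apply csSup_le (Set.range_nonempty _)
    rintro t ⟨i, rfl⟩
    have := hQ i
    dsimp only
    linarith
  linarith


section Geo

variable {d n : ℕ} (x : Fin n → EuclideanSpace ℝ (Fin d))

/-- `g_ξ(ω) = ∑ ξ i σ(⟨ω, x i⟩)`. -/
def gf (ξ : Fin n → ℝ) (ω : EuclideanSpace ℝ (Fin d)) : ℝ :=
  ∑ i, ξ i * max (inner ℝ ω (x i) : ℝ) 0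

/-- `S(ξ) = sup_{‖ω‖=1} g_ξ(ω)` (as in the theorem statement). -/
def SB (ξ : Fin n → ℝ) : ℝ :=
  sSup {t : ℝ | ∃ ω : EuclideanSpace ℝ (Fin d), ‖ω‖ = 1 ∧
    t = ∑ i, ξ i * max (inner ℝ ω (x i) : ℝ) 0}

lemma abs_max_le {u : ℝ} (c : ℝ) (hc : |u| ≤ c) : |max u 0| ≤ c := by
  rcases le_total u 0 with h | h
  · rw [max_eq_right h, abs_zero]; exact le_trans (abs_nonneg u) hc
  · rwa [max_eq_left h]

lemma abs_term_le (hx : ∀ i, ‖x i‖ = 1) {ξ : Fin n → ℝ} (hξ : ∀ i, |ξ i| ≤ 1)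
    {ω : EuclideanSpace ℝ (Fin d)} (hω : ‖ω‖ = 1) (i : Fin n) :
    |ξ i * max (inner ℝ ω (x i) : ℝ) 0| ≤ 1 := by
  rw [abs_mul]
  have h1 : |(inner ℝ ω (x i) : ℝ)| ≤ 1 := by
    have := abs_real_inner_le_norm ω (x i)
    rwa [hω, hx i, one_mul] at this
  have h2 := abs_max_le (u := (inner ℝ ω (x i) : ℝ)) 1 h1
  calc |ξ i| * |max (inner ℝ ω (x i) : ℝ) 0| ≤ 1 * 1 :=
        mul_le_mul (hξ i) h2 (abs_nonneg _) zero_le_one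
    _ = 1 := by ring

lemma gf_le (hx : ∀ i, ‖x i‖ = 1) {ξ : Fin n → ℝ} (hξ : ∀ i, |ξ i| ≤ 1)
    {ω : EuclideanSpace ℝ (Fin d)} (hω : ‖ω‖ = 1) : gf x ξ ω ≤ n := by
  unfold gf
  calc ∑ i, ξ i * max (inner ℝ ω (x i) : ℝ) 0 ≤ ∑ i : Fin n, (1:ℝ) :=
        Finset.sum_le_sum fun i _ => le_trans (le_abs_self _) (abs_term_le x hx hξ hω i)
    _ = n := by simp

lemma SB_bdd (hx : ∀ i, ‖x i‖ = 1) {ξ : Fin n → ℝ} (hξ : ∀ i, |ξ i| ≤ 1) :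
    BddAbove {t : ℝ | ∃ ω : EuclideanSpace ℝ (Fin d), ‖ω‖ = 1 ∧
      t = ∑ i, ξ i * max (inner ℝ ω (x i) : ℝ) 0} := by
  refine ⟨n, ?_⟩
  rintro t ⟨ω, hω, rfl⟩
  exact gf_le x hx hξ hω

lemma le_SB (hx : ∀ i, ‖x i‖ = 1) {ξ : Fin n → ℝ} (hξ : ∀ i, |ξ i| ≤ 1)
    {ω : EuclideanSpace ℝ (Fin d)} (hω : ‖ω‖ = 1) : gf x ξ ω ≤ SB x ξ :=
  le_csSup (SB_bdd x hx hξ) ⟨ω, hω, rfl⟩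

lemma gf_neg (ξ : Fin n → ℝ) (ω : EuclideanSpace ℝ (Fin d)) :
    gf x (fun i => -ξ i) ω = -gf x ξ ω := by
  unfold gf
  rw [← Finset.sum_neg_distrib]
  exact Finset.sum_congr rfl fun i _ => by ring

lemma gf_homog (ξ : Fin n → ℝ) {w : EuclideanSpace ℝ (Fin d)} (hw : w ≠ 0) :
    ∑ i, ξ i * max (inner ℝ w (x i) : ℝ) 0 = ‖w‖ * gf x ξ (‖w‖⁻¹ • w) := by
  have hc : (0:ℝ) < ‖w‖ := norm_pos_iff.mpr hw
  unfold gf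
  rw [Finset.mul_sum]
  refine Finset.sum_congr rfl fun i _ => ?_
  have hin : (inner ℝ w (x i) : ℝ) = ‖w‖ * (inner ℝ (‖w‖⁻¹ • w) (x i) : ℝ) := by
    rw [real_inner_smul_left]
    field_simp
  rw [hin, show (0:ℝ) = ‖w‖ * 0 by ring, ← mul_max_of_nonneg _ _ hc.le]
  ring_nf

lemma norm_normalize {w : EuclideanSpace ℝ (Fin d)} (hw : w ≠ 0) : ‖(‖w‖⁻¹ • w)‖ = 1 := by
  rw [norm_smul, norm_inv, norm_norm]
  exact inv_mul_cancel₀ (norm_ne_zero_iff.mpr hw)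

end Geo

section Geo2

variable {d n : ℕ} (x : Fin n → EuclideanSpace ℝ (Fin d))

lemma supA_le (hx : ∀ i, ‖x i‖ = 1) (hn : 0 < n) {r : ℝ} (hr : 0 < r) (m : ℕ)
    (ξ : Fin n → ℝ) (hξ : ∀ i, |ξ i| ≤ 1) :
    sSup {t : ℝ | ∃ (b : Fin m → ℝ) (w : Fin m → EuclideanSpace ℝ (Fin d)),
      (m : ℝ)⁻¹ * (∑ j, |b j| * ‖w j‖) ≤ r ∧
      t = ∑ i, ξ i * ((m : ℝ)⁻¹ * ∑ j, b j * max (inner ℝ (w j) (x i) : ℝ) 0)}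
    ≤ r * max (SB x ξ) (SB x (fun i => -ξ i)) := by
  have hξ' : ∀ i, |(-ξ i : ℝ)| ≤ 1 := fun i => by rw [abs_neg]; exact hξ i
  set M := max (SB x ξ) (SB x (fun i => -ξ i)) with hM
  have hω₀ : ‖x ⟨0, hn⟩‖ = 1 := hx _
  have hM0 : (0:ℝ) ≤ M := by
    have h1 : gf x ξ (x ⟨0, hn⟩) ≤ SB x ξ := le_SB x hx hξ hω₀
    have h2 : -gf x ξ (x ⟨0, hn⟩) ≤ SB x (fun i => -ξ i) := by
      rw [← gf_neg x ξ]
      exact le_SB x hx hξ' hω₀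
    rcases le_total 0 (gf x ξ (x ⟨0, hn⟩)) with h | h
    · exact le_trans (le_trans h h1) (le_max_left _ _)
    · exact le_trans (le_trans (by linarith) h2) (le_max_right _ _)
  apply Real.sSup_le ?_ (mul_nonneg hr.le hM0)
  rintro t ⟨b, w, hcon, rfl⟩
  have hrw : ∑ i, ξ i * ((m : ℝ)⁻¹ * ∑ j, b j * max (inner ℝ (w j) (x i) : ℝ) 0)
      = (m:ℝ)⁻¹ * ∑ j, b j * (∑ i, ξ i * max (inner ℝ (w j) (x i) : ℝ) 0) := by
    simp only [Finset.mul_sum]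
    rw [Finset.sum_comm]
    exact Finset.sum_congr rfl fun j _ => Finset.sum_congr rfl fun i _ => by ring
  rw [hrw]
  have hj : ∀ j, b j * (∑ i, ξ i * max (inner ℝ (w j) (x i) : ℝ) 0) ≤ |b j| * ‖w j‖ * M := by
    intro j
    by_cases hw : w j = 0
    · simp [hw]
    · rw [gf_homog x ξ hw]
      have hu : ‖(‖w j‖⁻¹ • w j)‖ = 1 := norm_normalize hw
      have hgM : gf x ξ (‖w j‖⁻¹ • w j) ≤ M := le_trans (le_SB x hx hξ hu) (le_max_left _ _)
      have hgM' : -gf x ξ (‖w j‖⁻¹ • w j) ≤ M := by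
        rw [← gf_neg x ξ]
        exact le_trans (le_SB x hx hξ' hu) (le_max_right _ _)
      have hnw : (0:ℝ) ≤ ‖w j‖ := norm_nonneg _
      rcases le_total 0 (b j) with hb | hb
      · rw [abs_of_nonneg hb]
        calc b j * (‖w j‖ * gf x ξ (‖w j‖⁻¹ • w j))
            = (b j * ‖w j‖) * gf x ξ (‖w j‖⁻¹ • w j) := by ring
          _ ≤ (b j * ‖w j‖) * M := mul_le_mul_of_nonneg_left hgM (mul_nonneg hb hnw)
          _ = b j * ‖w j‖ * M := by ring
      · rw [abs_of_nonpos hb]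
        calc b j * (‖w j‖ * gf x ξ (‖w j‖⁻¹ • w j))
            = ((-b j) * ‖w j‖) * (-gf x ξ (‖w j‖⁻¹ • w j)) := by ring
          _ ≤ ((-b j) * ‖w j‖) * M :=
              mul_le_mul_of_nonneg_left hgM' (mul_nonneg (by linarith) hnw)
          _ = -b j * ‖w j‖ * M := by ring
  calc (m:ℝ)⁻¹ * ∑ j, b j * (∑ i, ξ i * max (inner ℝ (w j) (x i) : ℝ) 0)
      ≤ (m:ℝ)⁻¹ * ∑ j, |b j| * ‖w j‖ * M := by
        apply mul_le_mul_of_nonneg_left (Finset.sum_le_sum fun j _ => hj j) (by positivity)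
    _ = ((m:ℝ)⁻¹ * ∑ j, |b j| * ‖w j‖) * M := by rw [← Finset.sum_mul]; ring
    _ ≤ r * M := mul_le_mul_of_nonneg_right hcon hM0

lemma phi_le_SB (hx : ∀ i, ‖x i‖ = 1) (hn : 0 < n) (ξ : Fin n → ℝ) (hξ : ∀ i, |ξ i| ≤ 1) :
    phi (gf x ξ (x ⟨0, hn⟩)) (gf x ξ (-(x ⟨0, hn⟩)))
      ≤ min (SB x ξ) (SB x (fun i => -ξ i)) := by
  have hξ' : ∀ i, |(-ξ i : ℝ)| ≤ 1 := fun i => by rw [abs_neg]; exact hξ i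
  have hω₀ : ‖x ⟨0, hn⟩‖ = 1 := hx _
  have hω₀' : ‖(-(x ⟨0, hn⟩) : EuclideanSpace ℝ (Fin d))‖ = 1 := by rw [norm_neg]; exact hω₀
  refine phi_le_min (le_SB x hx hξ hω₀) (le_SB x hx hξ hω₀') ?_ ?_
  · rw [← gf_neg x ξ]; exact le_SB x hx hξ' hω₀
  · rw [← gf_neg x ξ]; exact le_SB x hx hξ' hω₀'

lemma sg_flip_eq {n : ℕ} (ε : Fin n → Bool) (i : Fin n) : sg (fun j => !(ε j)) i = -(sg ε i) := by
  cases h : ε i <;> simp [sg, h]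

lemma sum_phi (hx : ∀ i, ‖x i‖ = 1) (hn : 0 < n) :
    ∑ ε : Fin n → Bool, phi (gf x (sg ε) (x ⟨0, hn⟩)) (gf x (sg ε) (-(x ⟨0, hn⟩))) = 0 := by
  set ω₀ := x ⟨0, hn⟩ with hω₀
  set τ : (Fin n → Bool) → (Fin n → Bool) :=
    fun ε i => if (inner ℝ ω₀ (x i) : ℝ) < 0 then !(ε i) else ε i with hτdef
  have hτ : Function.Involutive τ := by
    intro ε; funext i
    simp only [hτdef]
    by_cases h : (inner ℝ ω₀ (x i) : ℝ) < 0
    · rw [if_pos h, if_pos h, Bool.not_not]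
    · rw [if_neg h, if_neg h]
  have key1 : ∀ ε, gf x (sg (τ ε)) ω₀ = gf x (sg ε) ω₀ := by
    intro ε
    unfold gf
    refine Finset.sum_congr rfl fun i _ => ?_
    by_cases h : (inner ℝ ω₀ (x i) : ℝ) < 0
    · rw [max_eq_right h.le]
      ring
    · have hti : τ ε i = ε i := by simp only [hτdef]; rw [if_neg h]
      have : sg (τ ε) i = sg ε i := by unfold sg; rw [hti]
      rw [this]
  have key2 : ∀ ε, gf x (sg (τ ε)) (-ω₀) = -gf x (sg ε) (-ω₀) := by
    intro ε
    unfold gf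
    rw [← Finset.sum_neg_distrib]
    refine Finset.sum_congr rfl fun i _ => ?_
    have hin : (inner ℝ (-ω₀) (x i) : ℝ) = -(inner ℝ ω₀ (x i) : ℝ) := by
      rw [inner_neg_left]
    by_cases h : (inner ℝ ω₀ (x i) : ℝ) < 0
    · have hti : τ ε i = !(ε i) := by simp only [hτdef]; rw [if_pos h]
      have hsg : sg (τ ε) i = -(sg ε i) := by
        unfold sg; rw [hti]; cases ε i <;> norm_num
      rw [hsg]; ring
    · have hz : max (inner ℝ (-ω₀) (x i) : ℝ) 0 = 0 := by
        rw [hin]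
        exact max_eq_right (by linarith [not_lt.mp h])
      rw [hz]; ring
  have hsum := Equiv.sum_comp (Function.Involutive.toPerm τ hτ)
    (fun ε => phi (gf x (sg ε) ω₀) (gf x (sg ε) (-ω₀)))
  simp only [Function.Involutive.coe_toPerm] at hsum
  have hneg : ∀ ε, phi (gf x (sg (τ ε)) ω₀) (gf x (sg (τ ε)) (-ω₀))
      = -phi (gf x (sg ε) ω₀) (gf x (sg ε) (-ω₀)) := by
    intro ε
    rw [key1, key2, phi_neg_right]
  rw [Finset.sum_congr rfl (fun ε _ => hneg ε)] at hsum
  rw [Finset.sum_neg_distrib] at hsum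
  linarith

lemma sum_SB_neg (hx : ∀ i, ‖x i‖ = 1) :
    ∑ ε : Fin n → Bool, SB x (fun i => -(sg ε i)) = ∑ ε : Fin n → Bool, SB x (sg ε) := by
  set τ : (Fin n → Bool) → (Fin n → Bool) := fun ε i => !(ε i) with hτdef
  have hτ : Function.Involutive τ := by
    intro ε; funext i; simp [hτdef]
  have hsum := Equiv.sum_comp (Function.Involutive.toPerm τ hτ) (fun ε => SB x (sg ε))
  simp only [Function.Involutive.coe_toPerm] at hsum
  rw [← hsum]
  refine Finset.sum_congr rfl fun ε _ => ?_
  congr 1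
  funext i
  simp only [hτdef]
  exact (sg_flip_eq ε i).symm

end Geo2

section Geo3

variable {d n : ℕ} (x : Fin n → EuclideanSpace ℝ (Fin d))

/-- Interpolating suprema for the contraction argument. -/
def TT (k : ℕ) (ξ : Fin n → ℝ) : ℝ :=
  sSup (Set.range fun ω : {ω : EuclideanSpace ℝ (Fin d) // ‖ω‖ = 1} =>
    ∑ i : Fin n, (if (i : ℕ) < k then ξ i * (inner ℝ ω.1 (x i) : ℝ)
      else ξ i * max (inner ℝ ω.1 (x i) : ℝ) 0))

lemma SB_eq_TT0 (ξ : Fin n → ℝ) : SB x ξ = TT x 0 ξ := by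
  unfold SB TT
  congr 1
  ext t
  simp only [Set.mem_setOf_eq, Set.mem_range, Nat.not_lt_zero, if_false]
  constructor
  · rintro ⟨ω, hω, rfl⟩; exact ⟨⟨ω, hω⟩, rfl⟩
  · rintro ⟨⟨ω, hω⟩, rfl⟩; exact ⟨ω, hω, rfl⟩

lemma term_abs_le (hx : ∀ i, ‖x i‖ = 1) {ξ : Fin n → ℝ} (hξ : ∀ i, |ξ i| ≤ 1) (k : ℕ)
    (ω : {ω : EuclideanSpace ℝ (Fin d) // ‖ω‖ = 1}) (i : Fin n) :
    |if (i : ℕ) < k then ξ i * (inner ℝ ω.1 (x i) : ℝ)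
      else ξ i * max (inner ℝ ω.1 (x i) : ℝ) 0| ≤ 1 := by
  have h1 : |(inner ℝ ω.1 (x i) : ℝ)| ≤ 1 := by
    have := abs_real_inner_le_norm ω.1 (x i)
    rwa [ω.2, hx i, one_mul] at this
  split_ifs
  · rw [abs_mul]
    calc |ξ i| * |(inner ℝ ω.1 (x i) : ℝ)| ≤ 1 * 1 :=
          mul_le_mul (hξ i) h1 (abs_nonneg _) zero_le_one
      _ = 1 := by ring
  · rw [abs_mul]
    calc |ξ i| * |max (inner ℝ ω.1 (x i) : ℝ) 0| ≤ 1 * 1 :=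
          mul_le_mul (hξ i) (abs_max_le 1 h1) (abs_nonneg _) zero_le_one
      _ = 1 := by ring

lemma pair_step (hx : ∀ i, ‖x i‖ = 1) (hn : 0 < n) (k : ℕ) (hk : k < n)
    (ξ ξ' : Fin n → ℝ) (hξ : ∀ i, |ξ i| ≤ 1) (hξ' : ∀ i, |ξ' i| ≤ 1)
    (h1 : ξ ⟨k, hk⟩ = 1) (h2 : ξ' ⟨k, hk⟩ = -1)
    (hagree : ∀ i, i ≠ (⟨k, hk⟩ : Fin n) → ξ' i = ξ i) :
    TT x k ξ + TT x k ξ' ≤ TT x (k+1) ξ + TT x (k+1) ξ' := by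
  set K : Fin n := ⟨k, hk⟩ with hK
  haveI hne : Nonempty {ω : EuclideanSpace ℝ (Fin d) // ‖ω‖ = 1} := ⟨⟨x ⟨0, hn⟩, hx _⟩⟩
  set a : {ω : EuclideanSpace ℝ (Fin d) // ‖ω‖ = 1} → ℝ :=
    fun ω => (inner ℝ ω.1 (x K) : ℝ) with ha
  set hh : {ω : EuclideanSpace ℝ (Fin d) // ‖ω‖ = 1} → ℝ :=
    fun ω => ∑ i ∈ Finset.univ.erase K,
      (if (i : ℕ) < k then ξ i * (inner ℝ ω.1 (x i) : ℝ)
        else ξ i * max (inner ℝ ω.1 (x i) : ℝ) 0) with hhdef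
  have hsplit : ∀ (η : Fin n → ℝ) (c : ℕ) (ω : {ω : EuclideanSpace ℝ (Fin d) // ‖ω‖ = 1}),
      (c = k ∨ c = k + 1) → (∀ i, i ≠ K → η i = ξ i) →
      ∑ i : Fin n, (if (i : ℕ) < c then η i * (inner ℝ ω.1 (x i) : ℝ)
          else η i * max (inner ℝ ω.1 (x i) : ℝ) 0)
        = (if (K : ℕ) < c then η K * a ω else η K * max (a ω) 0) + hh ω := by
    intro η c ω hc hagr
    rw [← Finset.add_sum_erase _ _ (Finset.mem_univ K)]
    congr 1
    refine Finset.sum_congr rfl fun i hi => ?_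
    have hiK : i ≠ K := (Finset.mem_erase.mp hi).1
    have hik : (i : ℕ) ≠ k := fun hcon => hiK (Fin.ext hcon)
    rcases hc with rfl | rfl
    · rw [hagr i hiK]
    · by_cases hlt : (i : ℕ) < k
      · rw [if_pos hlt, if_pos (by omega), hagr i hiK]
      · rw [if_neg hlt, if_neg (by omega : ¬ ((i:ℕ) < k + 1)), hagr i hiK]
  have hKk : (K : ℕ) = k := rfl
  have e1 : TT x k ξ = sSup (Set.range fun ω => max (a ω) 0 + hh ω) := by
    unfold TT
    refine congrArg sSup (congrArg Set.range (funext fun ω => ?_))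
    rw [hsplit ξ k ω (Or.inl rfl) (fun _ _ => rfl), if_neg (by omega), h1, one_mul]
  have e2 : TT x k ξ' = sSup (Set.range fun ω => -max (a ω) 0 + hh ω) := by
    unfold TT
    refine congrArg sSup (congrArg Set.range (funext fun ω => ?_))
    rw [hsplit ξ' k ω (Or.inl rfl) hagree, if_neg (by omega), h2, neg_one_mul]
  have e3 : TT x (k+1) ξ = sSup (Set.range fun ω => a ω + hh ω) := by
    unfold TT
    refine congrArg sSup (congrArg Set.range (funext fun ω => ?_))
    rw [hsplit ξ (k+1) ω (Or.inr rfl) (fun _ _ => rfl), if_pos (by omega), h1, one_mul]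
  have e4 : TT x (k+1) ξ' = sSup (Set.range fun ω => -a ω + hh ω) := by
    unfold TT
    refine congrArg sSup (congrArg Set.range (funext fun ω => ?_))
    rw [hsplit ξ' (k+1) ω (Or.inr rfl) hagree, if_pos (by omega), h2, neg_one_mul]
  have habs_a : ∀ ω, |a ω| ≤ 1 := by
    intro ω
    have := abs_real_inner_le_norm ω.1 (x K)
    rwa [ω.2, hx K, one_mul] at this
  have habs_h : ∀ ω, |hh ω| ≤ ((Finset.univ.erase K).card : ℝ) := by
    intro ω
    refine le_trans (Finset.abs_sum_le_sum_abs _ _) ?_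
    calc ∑ i ∈ Finset.univ.erase K,
          |if (i : ℕ) < k then ξ i * (inner ℝ ω.1 (x i) : ℝ)
            else ξ i * max (inner ℝ ω.1 (x i) : ℝ) 0|
        ≤ ∑ _i ∈ Finset.univ.erase K, (1:ℝ) :=
          Finset.sum_le_sum fun i _ => term_abs_le x hx hξ k ω i
      _ = ((Finset.univ.erase K).card : ℝ) := by rw [Finset.sum_const, nsmul_eq_mul, mul_one]
  have b1 : BddAbove (Set.range fun ω => a ω + hh ω) := by
    refine ⟨1 + ((Finset.univ.erase K).card : ℝ), ?_⟩
    rintro t ⟨ω, rfl⟩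
    have h1' := habs_a ω
    have h2' := habs_h ω
    have := abs_le.mp h1'
    have := abs_le.mp h2'
    dsimp only
    linarith [(abs_le.mp h1').2, (abs_le.mp h2').2]
  have b2 : BddAbove (Set.range fun ω => -a ω + hh ω) := by
    refine ⟨1 + ((Finset.univ.erase K).card : ℝ), ?_⟩
    rintro t ⟨ω, rfl⟩
    dsimp only
    linarith [(abs_le.mp (habs_a ω)).1, (abs_le.mp (habs_h ω)).2]
  rw [e1, e2, e3, e4]
  exact sup_pair hne a hh b1 b2

lemma sum_TT_step (hx : ∀ i, ‖x i‖ = 1) (hn : 0 < n) (k : ℕ) (hk : k < n) :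
    ∑ ε : Fin n → Bool, TT x k (sg ε) ≤ ∑ ε : Fin n → Bool, TT x (k+1) (sg ε) := by
  set K : Fin n := ⟨k, hk⟩ with hK
  set τ : (Fin n → Bool) → (Fin n → Bool) := fun ε i => if i = K then !(ε i) else ε i with hτdef
  have hτ : Function.Involutive τ := by
    intro ε; funext i
    simp only [hτdef]
    by_cases h : i = K
    · rw [if_pos h, if_pos h, Bool.not_not]
    · rw [if_neg h, if_neg h]
  have hre : ∀ F : (Fin n → Bool) → ℝ, ∑ ε, F (τ ε) = ∑ ε, F ε := by
    intro F
    have := Equiv.sum_comp (Function.Involutive.toPerm τ hτ) F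
    simpa using this
  have key : ∀ ε, TT x k (sg ε) + TT x k (sg (τ ε))
      ≤ TT x (k+1) (sg ε) + TT x (k+1) (sg (τ ε)) := by
    intro ε
    have hag : ∀ i, i ≠ K → sg (τ ε) i = sg ε i := by
      intro i hi
      have : τ ε i = ε i := by simp only [hτdef]; rw [if_neg hi]
      unfold sg; rw [this]
    have hflipK : τ ε K = !(ε K) := by simp only [hτdef]; simp
    cases hb : ε K
    · have hA : sg ε K = -1 := by unfold sg; rw [hb]; norm_num
      have hB : sg (τ ε) K = 1 := by unfold sg; rw [hflipK, hb]; norm_num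
      have := pair_step x hx hn k hk (sg (τ ε)) (sg ε)
        (fun i => abs_sg_le _ i) (fun i => abs_sg_le _ i) hB hA (fun i hi => (hag i hi).symm)
      linarith
    · have hA : sg ε K = 1 := by unfold sg; rw [hb]; norm_num
      have hB : sg (τ ε) K = -1 := by unfold sg; rw [hflipK, hb]; norm_num
      have := pair_step x hx hn k hk (sg ε) (sg (τ ε))
        (fun i => abs_sg_le _ i) (fun i => abs_sg_le _ i) hA hB hag
      linarith
  have hsums := Finset.sum_le_sum (fun ε (_ : ε ∈ Finset.univ) => key ε)
  rw [Finset.sum_add_distrib, Finset.sum_add_distrib,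
    hre (fun ε => TT x k (sg ε)), hre (fun ε => TT x (k+1) (sg ε))] at hsums
  linarith

lemma sum_TT_mono (hx : ∀ i, ‖x i‖ = 1) (hn : 0 < n) :
    ∀ k, k ≤ n → ∑ ε : Fin n → Bool, TT x 0 (sg ε) ≤ ∑ ε : Fin n → Bool, TT x k (sg ε) := by
  intro k
  induction k with
  | zero => intro _; exact le_refl _
  | succ k ih =>
    intro hk
    exact le_trans (ih (Nat.le_of_succ_le hk)) (sum_TT_step x hx hn k hk)

lemma TT_last (hx : ∀ i, ‖x i‖ = 1) (hn : 0 < n) (ξ : Fin n → ℝ) :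
    TT x n ξ ≤ ‖∑ i, ξ i • x i‖ := by
  unfold TT
  apply Real.sSup_le ?_ (norm_nonneg _)
  rintro t ⟨ω, rfl⟩
  dsimp only
  have hcongr : ∀ i : Fin n,
      (if (i : ℕ) < n then ξ i * (inner ℝ ω.1 (x i) : ℝ)
        else ξ i * max (inner ℝ ω.1 (x i) : ℝ) 0) = ξ i * (inner ℝ ω.1 (x i) : ℝ) := by
    intro i
    rw [if_pos i.isLt]
  rw [Finset.sum_congr rfl fun i _ => hcongr i]
  have hlin : ∑ i, ξ i * (inner ℝ ω.1 (x i) : ℝ) = (inner ℝ ω.1 (∑ i, ξ i • x i) : ℝ) := by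
    rw [inner_sum]
    exact Finset.sum_congr rfl fun i _ => by rw [real_inner_smul_right]
  rw [hlin]
  calc (inner ℝ ω.1 (∑ i, ξ i • x i) : ℝ) ≤ ‖ω.1‖ * ‖∑ i, ξ i • x i‖ := real_inner_le_norm _ _
    _ = ‖∑ i, ξ i • x i‖ := by rw [ω.2, one_mul]

lemma sum_norm_le (hx : ∀ i, ‖x i‖ = 1) :
    ((2:ℝ) ^ n)⁻¹ * ∑ ε : Fin n → Bool, ‖∑ i, sg ε i • x i‖ ≤ Real.sqrt n := by
  have hcard : (Finset.univ : Finset (Fin n → Bool)).card = 2 ^ n := by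
    rw [Finset.card_univ]
    rw [Fintype.card_fun]
    simp
  have horth : ∀ i i' : Fin n,
      ∑ ε : Fin n → Bool, sg ε i * sg ε i' = if i = i' then (2:ℝ)^n else 0 := by
    intro i i'
    by_cases h : i = i'
    · subst h
      rw [if_pos rfl]
      have : ∀ ε : Fin n → Bool, sg ε i * sg ε i = 1 := by
        intro ε
        rcases sg_apply_eq_or ε i with h | h <;> rw [h] <;> norm_num
      rw [Finset.sum_congr rfl fun ε _ => this ε, Finset.sum_const, hcard, nsmul_eq_mul,
        mul_one, Nat.cast_pow]
      norm_num
    · rw [if_neg h]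
      set τ : (Fin n → Bool) → (Fin n → Bool) :=
        fun ε j => if j = i' then !(ε j) else ε j with hτdef
      have hτ : Function.Involutive τ := by
        intro ε; funext j
        simp only [hτdef]
        by_cases hji : j = i'
        · rw [if_pos hji, if_pos hji, Bool.not_not]
        · rw [if_neg hji, if_neg hji]
      have hre := Equiv.sum_comp (Function.Involutive.toPerm τ hτ)
        (fun ε => sg ε i * sg ε i')
      simp only [Function.Involutive.coe_toPerm] at hre
      have hneg : ∀ ε, sg (τ ε) i * sg (τ ε) i' = -(sg ε i * sg ε i') := by
        intro ε
        have ht1 : τ ε i = ε i := by simp only [hτdef]; rw [if_neg h]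
        have ht2 : τ ε i' = !(ε i') := by simp only [hτdef]; simp
        have hs1 : sg (τ ε) i = sg ε i := by unfold sg; rw [ht1]
        have hs2 : sg (τ ε) i' = -(sg ε i') := by
          unfold sg; rw [ht2]; cases ε i' <;> norm_num
        rw [hs1, hs2]; ring
      rw [Finset.sum_congr rfl (fun ε _ => hneg ε), Finset.sum_neg_distrib] at hre
      linarith
  have hsq : ∑ ε : Fin n → Bool, ‖∑ i, sg ε i • x i‖^2 = 2^n * n := by
    have h1 : ∀ ε : Fin n → Bool,
        ‖∑ i, sg ε i • x i‖^2 = ∑ i, ∑ i', (sg ε i * sg ε i') * (inner ℝ (x i) (x i') : ℝ) := by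
      intro ε
      rw [← real_inner_self_eq_norm_sq]
      rw [sum_inner]
      refine Finset.sum_congr rfl fun i _ => ?_
      rw [inner_sum]
      refine Finset.sum_congr rfl fun i' _ => ?_
      rw [real_inner_smul_left, real_inner_smul_right]
      ring
    rw [Finset.sum_congr rfl fun ε _ => h1 ε]
    rw [Finset.sum_comm]
    have h2 : ∀ i : Fin n, ∑ ε : Fin n → Bool, ∑ i', (sg ε i * sg ε i') * (inner ℝ (x i) (x i') : ℝ)
        = (2:ℝ)^n := by
      intro i
      rw [Finset.sum_comm]
      have h3 : ∀ i' : Fin n,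
          ∑ ε : Fin n → Bool, (sg ε i * sg ε i') * (inner ℝ (x i) (x i') : ℝ)
            = if i = i' then (2:ℝ)^n * (inner ℝ (x i) (x i') : ℝ) else 0 := by
        intro i'
        rw [← Finset.sum_mul, horth i i', ite_mul, zero_mul]
      rw [Finset.sum_congr rfl fun i' _ => h3 i']
      rw [Finset.sum_ite_eq (Finset.univ : Finset (Fin n)) i
        (fun i' => ((2:ℝ)^n) * (inner ℝ (x i) (x i') : ℝ)), if_pos (Finset.mem_univ i)]
      rw [real_inner_self_eq_norm_sq, hx i]
      norm_num
    rw [Finset.sum_congr rfl fun i (_ : i ∈ Finset.univ) => h2 i, Finset.sum_const,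
      Finset.card_univ, Fintype.card_fin, nsmul_eq_mul]
    ring
  have hcs := Finset.sum_mul_sq_le_sq_mul_sq (Finset.univ : Finset (Fin n → Bool))
    (fun _ => (1:ℝ)) (fun ε => ‖∑ i, sg ε i • x i‖)
  simp only [one_mul, one_pow] at hcs
  rw [Finset.sum_const, hcard, nsmul_eq_mul, mul_one] at hcs
  set N := ∑ ε : Fin n → Bool, ‖∑ i, sg ε i • x i‖ with hN
  have hN0 : (0:ℝ) ≤ N := Finset.sum_nonneg fun ε _ => norm_nonneg _
  have h2n : (0:ℝ) < 2^n := by positivity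
  rw [Real.le_sqrt (by positivity) (by positivity)]
  have hb : N^2 ≤ (2:ℝ)^n * ((2:ℝ)^n * n) := by
    refine le_trans hcs (le_of_eq ?_)
    rw [hsq]
    push_cast
    ring
  have hmul : (((2:ℝ)^n)⁻¹ * N)^2 = ((2:ℝ)^n)⁻¹^2 * N^2 := by ring
  rw [hmul]
  calc ((2:ℝ)^n)⁻¹^2 * N^2 ≤ ((2:ℝ)^n)⁻¹^2 * ((2:ℝ)^n * ((2:ℝ)^n * n)) :=
        mul_le_mul_of_nonneg_left hb (by positivity)
    _ = (n:ℝ) := by field_simp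

end Geo3

end Stmt5Aux

open Stmt5Aux

/-- for points `x_1, …, x_{n'}` on the unit sphere `S^{d-1}`, i.i.d. Rademacher
variables `ξ_1, …, ξ_{n'}`, any `r > 0` and `m ∈ ℕ⁺`,
`E sup { Σ_i ξ_i (1/m) Σ_j b_j σ(ω_j·x_i) : (1/m) Σ_j |b_j| ‖ω_j‖ ≤ r }
  ≤ 2 r E sup_{‖ω‖=1} Σ_i ξ_i σ(ω·x_i) ≤ 2 r √n'`, where `σ` is the ReLU. -/
theorem stmt5 {d : ℕ} (n' : ℕ) (x : Fin n' → EuclideanSpace ℝ (Fin d))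
    (hx : ∀ i, ‖x i‖ = 1) (r : ℝ) (hr : 0 < r) (m : ℕ) (hm : 0 < m) :
    (∫ ξ : Fin n' → ℝ,
        sSup {t : ℝ | ∃ (b : Fin m → ℝ) (w : Fin m → EuclideanSpace ℝ (Fin d)),
          (m : ℝ)⁻¹ * (∑ j, |b j| * ‖w j‖) ≤ r ∧
          t = ∑ i, ξ i * ((m : ℝ)⁻¹ * ∑ j, b j * max (inner ℝ (w j) (x i) : ℝ) 0)}
        ∂(Measure.pi fun _ : Fin n' => radM))
      ≤ 2 * r * ∫ ξ : Fin n' → ℝ,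
          sSup {t : ℝ | ∃ ω : EuclideanSpace ℝ (Fin d), ‖ω‖ = 1 ∧
            t = ∑ i, ξ i * max (inner ℝ ω (x i) : ℝ) 0}
          ∂(Measure.pi fun _ : Fin n' => radM) ∧
    2 * r * (∫ ξ : Fin n' → ℝ,
          sSup {t : ℝ | ∃ ω : EuclideanSpace ℝ (Fin d), ‖ω‖ = 1 ∧
            t = ∑ i, ξ i * max (inner ℝ ω (x i) : ℝ) 0}
          ∂(Measure.pi fun _ : Fin n' => radM))
      ≤ 2 * r * Real.sqrt n' := by

  rcases Nat.eq_zero_or_pos n' with hn0 | hn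
  · subst hn0
    have hA0 : ∀ ξ : Fin 0 → ℝ,
        sSup {t : ℝ | ∃ (b : Fin m → ℝ) (w : Fin m → EuclideanSpace ℝ (Fin d)),
          (m : ℝ)⁻¹ * (∑ j, |b j| * ‖w j‖) ≤ r ∧
          t = ∑ i, ξ i * ((m : ℝ)⁻¹ * ∑ j, b j * max (inner ℝ (w j) (x i) : ℝ) 0)} = 0 := by
      intro ξ
      have hset : {t : ℝ | ∃ (b : Fin m → ℝ) (w : Fin m → EuclideanSpace ℝ (Fin d)),
          (m : ℝ)⁻¹ * (∑ j, |b j| * ‖w j‖) ≤ r ∧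
          t = ∑ i, ξ i * ((m : ℝ)⁻¹ * ∑ j, b j * max (inner ℝ (w j) (x i) : ℝ) 0)}
          = {(0:ℝ)} := by
        ext t
        simp only [Set.mem_setOf_eq, Set.mem_singleton_iff]
        constructor
        · rintro ⟨b, w, -, rfl⟩
          simp
        · rintro rfl
          exact ⟨0, 0, by simpa using hr.le, by simp⟩
      rw [hset]
      exact csSup_singleton 0
    have hB0 : ∀ ξ : Fin 0 → ℝ,
        sSup {t : ℝ | ∃ ω : EuclideanSpace ℝ (Fin d), ‖ω‖ = 1 ∧
          t = ∑ i, ξ i * max (inner ℝ ω (x i) : ℝ) 0} = 0 := by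
      intro ξ
      by_cases hd : ∃ ω : EuclideanSpace ℝ (Fin d), ‖ω‖ = 1
      · have hset : {t : ℝ | ∃ ω : EuclideanSpace ℝ (Fin d), ‖ω‖ = 1 ∧
            t = ∑ i, ξ i * max (inner ℝ ω (x i) : ℝ) 0} = {(0:ℝ)} := by
          ext t
          simp only [Set.mem_setOf_eq, Set.mem_singleton_iff]
          constructor
          · rintro ⟨ω, hω, rfl⟩
            simp
          · rintro rfl
            exact ⟨hd.choose, hd.choose_spec, by simp⟩
        rw [hset]
        exact csSup_singleton 0
      · have hset : {t : ℝ | ∃ ω : EuclideanSpace ℝ (Fin d), ‖ω‖ = 1 ∧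
            t = ∑ i, ξ i * max (inner ℝ ω (x i) : ℝ) 0} = (∅ : Set ℝ) := by
          ext t
          simp only [Set.mem_setOf_eq, Set.mem_empty_iff_false, iff_false]
          rintro ⟨ω, hω, -⟩
          exact hd ⟨ω, hω⟩
        rw [hset]
        exact Real.sSup_empty
    simp only [hA0, hB0, integral_zero]
    norm_num
  · have hc : (0:ℝ) ≤ ((2:ℝ) ^ n')⁻¹ := by positivity
    have habs : ∀ ε : Fin n' → Bool, ∀ i, |sg ε i| ≤ 1 := fun ε i => abs_sg_le ε i
    constructor
    · rw [integral_pi_radM, integral_pi_radM]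
      have key : ∀ ε : Fin n' → Bool,
          sSup {t : ℝ | ∃ (b : Fin m → ℝ) (w : Fin m → EuclideanSpace ℝ (Fin d)),
            (m : ℝ)⁻¹ * (∑ j, |b j| * ‖w j‖) ≤ r ∧
            t = ∑ i, sg ε i * ((m : ℝ)⁻¹ * ∑ j, b j * max (inner ℝ (w j) (x i) : ℝ) 0)}
          ≤ r * (SB x (sg ε) + SB x (fun i => -sg ε i)
              - phi (gf x (sg ε) (x ⟨0, hn⟩)) (gf x (sg ε) (-(x ⟨0, hn⟩)))) := by
        intro ε
        have h1 := supA_le x hx hn hr m (sg ε) (habs ε)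
        have h2 := phi_le_SB x hx hn (sg ε) (habs ε)
        have hmm := max_add_min (SB x (sg ε)) (SB x (fun i => -sg ε i))
        have h3 : max (SB x (sg ε)) (SB x (fun i => -sg ε i))
            ≤ SB x (sg ε) + SB x (fun i => -sg ε i)
              - phi (gf x (sg ε) (x ⟨0, hn⟩)) (gf x (sg ε) (-(x ⟨0, hn⟩))) := by
          have h4 := le_min_iff.mp h2
          linarith [min_le_left (SB x (sg ε)) (SB x (fun i => -sg ε i)), h2]
        exact le_trans h1 (mul_le_mul_of_nonneg_left h3 hr.le)
      have hsum1 : (∑ ε : Fin n' → Bool,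
            sSup {t : ℝ | ∃ (b : Fin m → ℝ) (w : Fin m → EuclideanSpace ℝ (Fin d)),
              (m : ℝ)⁻¹ * (∑ j, |b j| * ‖w j‖) ≤ r ∧
              t = ∑ i, sg ε i * ((m : ℝ)⁻¹ * ∑ j, b j * max (inner ℝ (w j) (x i) : ℝ) 0)})
          ≤ r * (2 * ∑ ε : Fin n' → Bool, SB x (sg ε)) := by
        calc (∑ ε : Fin n' → Bool,
              sSup {t : ℝ | ∃ (b : Fin m → ℝ) (w : Fin m → EuclideanSpace ℝ (Fin d)),
                (m : ℝ)⁻¹ * (∑ j, |b j| * ‖w j‖) ≤ r ∧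
                t = ∑ i, sg ε i * ((m : ℝ)⁻¹ * ∑ j, b j * max (inner ℝ (w j) (x i) : ℝ) 0)})
            ≤ ∑ ε : Fin n' → Bool, r * (SB x (sg ε) + SB x (fun i => -sg ε i)
                - phi (gf x (sg ε) (x ⟨0, hn⟩)) (gf x (sg ε) (-(x ⟨0, hn⟩)))) :=
              Finset.sum_le_sum fun ε _ => key ε
          _ = r * ((∑ ε : Fin n' → Bool, SB x (sg ε))
                + (∑ ε : Fin n' → Bool, SB x (fun i => -sg ε i))
                - (∑ ε : Fin n' → Bool,
                    phi (gf x (sg ε) (x ⟨0, hn⟩)) (gf x (sg ε) (-(x ⟨0, hn⟩))))) := by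
              rw [← Finset.mul_sum]
              congr 1
              rw [Finset.sum_sub_distrib, Finset.sum_add_distrib]
          _ = r * (2 * ∑ ε : Fin n' → Bool, SB x (sg ε)) := by
              rw [sum_SB_neg x hx, sum_phi x hx hn]
              ring
      calc ((2:ℝ) ^ n')⁻¹ * (∑ ε : Fin n' → Bool,
            sSup {t : ℝ | ∃ (b : Fin m → ℝ) (w : Fin m → EuclideanSpace ℝ (Fin d)),
              (m : ℝ)⁻¹ * (∑ j, |b j| * ‖w j‖) ≤ r ∧
              t = ∑ i, sg ε i * ((m : ℝ)⁻¹ * ∑ j, b j * max (inner ℝ (w j) (x i) : ℝ) 0)})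
          ≤ ((2:ℝ) ^ n')⁻¹ * (r * (2 * ∑ ε : Fin n' → Bool, SB x (sg ε))) :=
            mul_le_mul_of_nonneg_left hsum1 hc
        _ = 2 * r * (((2:ℝ) ^ n')⁻¹ * ∑ ε : Fin n' → Bool, SB x (sg ε)) := by ring
    · rw [integral_pi_radM]
      have hchain : ((2:ℝ) ^ n')⁻¹ * (∑ ε : Fin n' → Bool, SB x (sg ε)) ≤ Real.sqrt n' := by
        have e0 : (∑ ε : Fin n' → Bool, SB x (sg ε)) = ∑ ε : Fin n' → Bool, TT x 0 (sg ε) :=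
          Finset.sum_congr rfl fun ε _ => SB_eq_TT0 x (sg ε)
        have e1 := sum_TT_mono x hx hn n' le_rfl
        have e2 : (∑ ε : Fin n' → Bool, TT x n' (sg ε))
            ≤ ∑ ε : Fin n' → Bool, ‖∑ i, sg ε i • x i‖ :=
          Finset.sum_le_sum fun ε _ => TT_last x hx hn (sg ε)
        have e3 := sum_norm_le x hx
        calc ((2:ℝ) ^ n')⁻¹ * (∑ ε : Fin n' → Bool, SB x (sg ε))
            = ((2:ℝ) ^ n')⁻¹ * (∑ ε : Fin n' → Bool, TT x 0 (sg ε)) := by rw [e0]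
          _ ≤ ((2:ℝ) ^ n')⁻¹ * (∑ ε : Fin n' → Bool, TT x n' (sg ε)) :=
              mul_le_mul_of_nonneg_left e1 hc
          _ ≤ ((2:ℝ) ^ n')⁻¹ * (∑ ε : Fin n' → Bool, ‖∑ i, sg ε i • x i‖) :=
              mul_le_mul_of_nonneg_left e2 hc
          _ ≤ Real.sqrt n' := e3
      have h2r : (0:ℝ) ≤ 2 * r := by linarith
      exact mul_le_mul_of_nonneg_left hchain h2r


end
end
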